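/- arXiv:2509.13718 — 3 statements merged into one kernel-verified Lean document; each statement's English description precedes it below -/
import Mathlib

section
/- For every vector X of an oriented matroid M, the size of the support of X satisfies |supp(X)| ≤ rk(M) + height(X), where height(X) is the length of a maximal chain from the zero vector to X in the lattice of vectors of M. -/
/-- A sign vector on a ground set `E`. -/
abbrev SignVec (E : Type*) := E → SignType

namespace SignVec

/-- The support of a sign vector. -/
def support {E : Type*} (X : SignVec E) : Set E := {e | X e ≠ 0}

/-- The conformal (partial) order on sign vectors: `X ⪯ Y` iff `X e ≠ 0 → X e = Y e`. -/
def le {E : Type*} (X Y : SignVec E) : Prop := ∀ e, X e ≠ 0 → Y e = X e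

/-- Strict conformal order. -/
def lt {E : Type*} (X Y : SignVec E) : Prop := le X Y ∧ X ≠ Y

/-- A sign vector is positive if it has no negative entry. -/
def IsPositive {E : Type*} (X : SignVec E) : Prop := ∀ e, 0 ≤ X e

/-- Composition of sign vectors. -/
def comp {E : Type*} (X Y : SignVec E) : SignVec E := fun e => if X e = 0 then Y e else X e

/-- Orthogonality of sign vectors. -/
def Orth {E : Type*} (X Y : SignVec E) : Prop :=
  (∃ e, X e * Y e = 1) ↔ (∃ e, X e * Y e = -1)

end SignVec

/-- An oriented matroid, given by its signed circuit axioms. -/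
structure OrientedMatroid (E : Type*) [Fintype E] [DecidableEq E] where
  circuits : Set (SignVec E)
  ne_zero : ∀ C ∈ circuits, C ≠ 0
  neg_mem : ∀ C ∈ circuits, -C ∈ circuits
  support_incomparable : ∀ C ∈ circuits, ∀ D ∈ circuits,
      SignVec.support C ⊆ SignVec.support D → C = D ∨ C = -D
  elimination : ∀ C ∈ circuits, ∀ D ∈ circuits, C ≠ -D → ∀ e, C e = 1 → D e = -1 →
      ∃ Z ∈ circuits, Z e = 0 ∧
        (∀ f, Z f = 1 → C f = 1 ∨ D f = 1) ∧
        (∀ f, Z f = -1 → C f = -1 ∨ D f = -1)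

namespace OrientedMatroid

variable {E : Type*} [Fintype E] [DecidableEq E] (M : OrientedMatroid E)

/-- Independent sets of the underlying matroid: sets containing no circuit support. -/
def Indep (S : Set E) : Prop := ∀ C ∈ M.circuits, ¬ SignVec.support C ⊆ S

/-- The rank of the (underlying matroid of the) oriented matroid. -/
noncomputable def rank : ℕ := sSup {k | ∃ S : Set E, M.Indep S ∧ S.ncard = k}

/-- Positive circuits. -/
def IsPositiveCircuit (C : SignVec E) : Prop := C ∈ M.circuits ∧ SignVec.IsPositive C

/-- Vectors: compositions of (finitely many) circuits, including the zero vector. -/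
def IsVector (X : SignVec E) : Prop :=
  ∃ l : List (SignVec E), (∀ C ∈ l, C ∈ M.circuits) ∧ X = l.foldr SignVec.comp 0

/-- The height of a vector in the lattice of vectors: the size of a maximal chain from
the zero vector to `X`, minus one. -/
noncomputable def height (X : SignVec E) : ℕ :=
  sSup {h | ∃ c : Fin (h+1) → SignVec E, (∀ i, M.IsVector (c i)) ∧ c 0 = 0 ∧
    c (Fin.last h) = X ∧ ∀ i j : Fin (h+1), i < j → SignVec.lt (c i) (c j)}

/-- Covectors: sign vectors orthogonal to every circuit. -/
def IsCovector (Y : SignVec E) : Prop := ∀ C ∈ M.circuits, SignVec.Orth C Y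

/-- Topes: maximal covectors (for the conformal order). -/
def IsTope (T : SignVec E) : Prop :=
  M.IsCovector T ∧ ∀ Y, M.IsCovector Y → SignVec.le T Y → Y = T

/-- The oriented matroid is uniform of rank `r`: circuit supports are exactly the
`(r+1)`-element subsets of the ground set. -/
def IsUniform (r : ℕ) : Prop :=
  (∀ C ∈ M.circuits, (SignVec.support C).ncard = r + 1) ∧
  (∀ S : Set E, S.ncard = r + 1 → ∃ C ∈ M.circuits, SignVec.support C = S)

end OrientedMatroid


namespace OM5

open SignVec


open SignVec

lemma sign_cases (x : SignType) (hx : x ≠ 0) : x = 1 ∨ x = -1 := by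
  cases x
  · simp at hx
  · right; rfl
  · left; rfl

lemma support_neg' {E : Type*} (C : SignVec E) :
    SignVec.support (-C) = SignVec.support C := by
  ext e; simp only [SignVec.support, Set.mem_setOf_eq, Pi.neg_apply]
  cases hc : C e <;> simp [hc]

lemma support_zero : SignVec.support (0 : SignVec E) = ∅ := by
  ext e; simp [SignVec.support]

lemma le_trans' {X Y Z : SignVec E} (h1 : SignVec.le X Y) (h2 : SignVec.le Y Z) :
    SignVec.le X Z := by
  intro e he
  rw [h2 e (by rw [h1 e he]; exact he), h1 e he]

lemma le_antisymm' {X Y : SignVec E} (h1 : SignVec.le X Y) (h2 : SignVec.le Y X) : X = Y := by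
  funext e
  by_cases hy : Y e = 0
  · by_cases hx : X e = 0
    · rw [hx, hy]
    · exact (h1 e hx).symm
  · exact h2 e hy

lemma support_mono_le {X Y : SignVec E} (h : SignVec.le X Y) :
    SignVec.support X ⊆ SignVec.support Y := by
  intro e he
  simp only [SignVec.support, Set.mem_setOf_eq] at *
  rw [h e he]; exact he

lemma eq_of_le_of_support_subset {X Y : SignVec E} (h : SignVec.le X Y)
    (hs : SignVec.support Y ⊆ SignVec.support X) : X = Y := by
  apply le_antisymm' h
  intro e he
  exact (h e (hs he)).symm

lemma comp_zero (X : SignVec E) : SignVec.comp X 0 = X := by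
  funext e; simp only [SignVec.comp, Pi.zero_apply]
  split <;> simp_all

lemma zero_comp (X : SignVec E) : SignVec.comp 0 X = X := by
  funext e; simp [SignVec.comp]

lemma comp_assoc (X Y Z : SignVec E) :
    SignVec.comp (SignVec.comp X Y) Z = SignVec.comp X (SignVec.comp Y Z) := by
  funext e; simp only [SignVec.comp]
  by_cases hx : X e = 0 <;> by_cases hy : Y e = 0 <;> simp [hx, hy]

lemma le_comp (X Y : SignVec E) : SignVec.le X (SignVec.comp X Y) := by
  intro e he; simp [SignVec.comp, he]

lemma support_comp (X Y : SignVec E) :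
    SignVec.support (SignVec.comp X Y) = SignVec.support X ∪ SignVec.support Y := by
  ext e
  simp only [SignVec.support, SignVec.comp, Set.mem_union, Set.mem_setOf_eq]
  by_cases hx : X e = 0 <;> simp [hx]

lemma foldr_comp_shift (l : List (SignVec E)) (z : SignVec E) :
    l.foldr SignVec.comp z = SignVec.comp (l.foldr SignVec.comp 0) z := by
  induction l with
  | nil => simp [zero_comp]
  | cons a l ih => simp only [List.foldr_cons, ih, comp_assoc]

lemma foldr_comp_append_single (l : List (SignVec E)) (C : SignVec E) :
    (l ++ [C]).foldr SignVec.comp 0 = SignVec.comp (l.foldr SignVec.comp 0) C := by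
  rw [List.foldr_append, List.foldr_cons, List.foldr_nil, comp_zero, foldr_comp_shift]


variable {E : Type*} [Fintype E] [DecidableEq E] {M : OrientedMatroid E}

/-- supports of circuits are nonempty -/
lemma circ_supp_nonempty {C : SignVec E} (hC : C ∈ M.circuits) :
    (SignVec.support C).Nonempty := by
  have h := M.ne_zero C hC
  rcases Set.eq_empty_or_nonempty (SignVec.support C) with h0 | h0
  · exfalso; apply h; funext e
    have : e ∉ SignVec.support C := by rw [h0]; exact Set.notMem_empty e
    simpa [SignVec.support, not_not] using this
  · exact h0

lemma indep_empty : M.Indep ∅ := by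
  intro C hC hsub
  obtain ⟨e, he⟩ := circ_supp_nonempty hC
  exact (hsub he).elim

lemma indep_subset {S T : Set E} (hS : M.Indep S) (hTS : T ⊆ S) : M.Indep T := by
  intro C hC hsub
  exact hS C hC (hsub.trans hTS)

lemma not_indep_iff {S : Set E} :
    ¬ M.Indep S ↔ ∃ C ∈ M.circuits, SignVec.support C ⊆ S := by
  simp [OrientedMatroid.Indep]

/-- unsigned incomparability -/
lemma circ_supp_eq {C D : SignVec E} (hC : C ∈ M.circuits) (hD : D ∈ M.circuits)
    (h : SignVec.support C ⊆ SignVec.support D) :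
    SignVec.support C = SignVec.support D := by
  rcases M.support_incomparable C hC D hD h with h' | h'
  · rw [h']
  · rw [h', support_neg']

/-- unsigned weak elimination -/
lemma circ_elim {C D : SignVec E} (hC : C ∈ M.circuits) (hD : D ∈ M.circuits)
    (hne : SignVec.support C ≠ SignVec.support D) {e : E}
    (heC : e ∈ SignVec.support C) (heD : e ∈ SignVec.support D) :
    ∃ Z ∈ M.circuits,
      SignVec.support Z ⊆ (SignVec.support C ∪ SignVec.support D) \ {e} := by
  -- normalize signs at e
  have hCe : C e ≠ 0 := heC
  have hDe : D e ≠ 0 := heD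
  obtain ⟨C1, hC1, hC1s, hC1e⟩ : ∃ C1 ∈ M.circuits,
      SignVec.support C1 = SignVec.support C ∧ C1 e = 1 := by
    rcases sign_cases _ hCe with h | h
    · exact ⟨C, hC, rfl, h⟩
    · exact ⟨-C, M.neg_mem C hC, support_neg' C, by simp [h]⟩
  obtain ⟨D1, hD1, hD1s, hD1e⟩ : ∃ D1 ∈ M.circuits,
      SignVec.support D1 = SignVec.support D ∧ D1 e = -1 := by
    rcases sign_cases _ hDe with h | h
    · exact ⟨-D, M.neg_mem D hD, support_neg' D, by simp [h]⟩
    · exact ⟨D, hD, rfl, h⟩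
  have hneg : C1 ≠ -D1 := by
    intro h
    apply hne
    rw [← hC1s, ← hD1s, h, support_neg']
  obtain ⟨Z, hZ, hZe, hZ1, hZ2⟩ := M.elimination C1 hC1 D1 hD1 hneg e hC1e hD1e
  refine ⟨Z, hZ, ?_⟩
  intro f hf
  have hfZ : Z f ≠ 0 := hf
  constructor
  · rcases sign_cases _ hfZ with h | h
    · rcases hZ1 f h with h' | h'
      · left; rw [← hC1s]; simp [SignVec.support, h']
      · right; rw [← hD1s]; simp [SignVec.support, h']
    · rcases hZ2 f h with h' | h'
      · left; rw [← hC1s]; simp [SignVec.support, h']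
      · right; rw [← hD1s]; simp [SignVec.support, h']
  · intro hfe
    rw [Set.mem_singleton_iff] at hfe
    subst hfe
    exact hfZ hZe

/-- Augmentation (Oxley I3), by strong induction on `(J \ I).ncard`. -/
lemma augment : ∀ n : ℕ, ∀ I J : Set E, M.Indep I → M.Indep J → I.ncard < J.ncard →
    (J \ I).ncard = n → ∃ e ∈ J \ I, M.Indep (insert e I) := by
  intro n
  induction n using Nat.strong_induction_on with
  | _ n ih =>
    intro I J hI hJ hlt hn
    by_contra hcon
    push_neg at hcon
    have hJI : (J \ I).Nonempty := by
      rw [Set.nonempty_iff_ne_empty]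
      intro h
      have : J ⊆ I := by rwa [Set.diff_eq_empty] at h
      exact absurd (Set.ncard_le_ncard this (Set.toFinite I)) (by omega)
    obtain ⟨f, hf⟩ := hJI
    have hfJ : f ∈ J := hf.1
    have hfI : f ∉ I := hf.2
    -- circuit in insert f I
    obtain ⟨C, hC, hCs⟩ := not_indep_iff.mp (hcon f hf)
    have hfC : f ∈ SignVec.support C := by
      by_contra h
      refine hI C hC ?_
      intro x hx
      rcases hCs hx with h' | h'
      · exact absurd (h' ▸ hx) h
      · exact h'
    obtain ⟨g, hgC, hgI, hgJ⟩ : ∃ g ∈ SignVec.support C, g ∈ I ∧ g ∉ J := by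
      by_contra h
      push_neg at h
      refine hJ C hC ?_
      intro x hx
      rcases hCs hx with h' | h'
      · exact h' ▸ hfJ
      · exact h x hx h'
    have hfg : f ≠ g := fun h => hfI (h ▸ hgI)
    set I' : Set E := insert f (I \ {g}) with hI'def
    have hI'sub : I \ {g} ⊆ I := Set.diff_subset
    have hI' : M.Indep I' := by
      by_contra h
      obtain ⟨C', hC', hC's⟩ := not_indep_iff.mp h
      have hfC' : f ∈ SignVec.support C' := by
        by_contra h'
        refine hI C' hC' ?_
        intro x hx
        rcases hC's hx with h'' | h''
        · exact absurd (h'' ▸ hx) h'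
        · exact h''.1
      have hne : SignVec.support C ≠ SignVec.support C' := by
        intro h'
        have : g ∈ SignVec.support C' := h' ▸ hgC
        rcases hC's this with h'' | h''
        · exact hfg h''.symm
        · exact h''.2 rfl
      obtain ⟨Z, hZ, hZs⟩ := circ_elim hC hC' hne hfC hfC'
      refine hI Z hZ ?_
      intro x hx
      have := hZs hx
      have hxf : x ≠ f := fun h' => this.2 (h' ▸ rfl)
      rcases this.1 with h' | h'
      · rcases hCs h' with h'' | h''
        · exact absurd h'' hxf
        · exact h''
      · rcases hC's h' with h'' | h''
        · exact absurd h'' hxf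
        · exact h''.1
    have hcard : I'.ncard = I.ncard := by
      rw [hI'def, Set.ncard_insert_of_notMem (fun h => hfI h.1) (Set.toFinite _),
        Set.ncard_diff_singleton_of_mem hgI]
      have : 0 < I.ncard := (Set.ncard_pos (Set.toFinite I)).mpr ⟨g, hgI⟩
      omega
    have hdiff : J \ I' = (J \ I) \ {f} := by
      ext x
      by_cases hxg : x = g
      · subst hxg
        simp only [hI'def, Set.mem_diff, Set.mem_insert_iff, Set.mem_singleton_iff]
        constructor
        · rintro ⟨hxJ, -⟩; exact absurd hxJ hgJ
        · rintro ⟨⟨hxJ, -⟩, -⟩; exact absurd hxJ hgJ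
      · simp only [hI'def, Set.mem_diff, Set.mem_insert_iff, Set.mem_singleton_iff]
        tauto
    have hn' : (J \ I').ncard = n - 1 := by
      rw [hdiff, Set.ncard_diff_singleton_of_mem hf, hn]
    have hnpos : 1 ≤ n := by
      have : 0 < (J \ I).ncard := (Set.ncard_pos (Set.toFinite _)).mpr ⟨f, hf⟩
      omega
    obtain ⟨e, he, hInd'⟩ := ih (n - 1) (by omega) I' J hI' hJ (by omega) hn'
    have heJ : e ∈ J := he.1
    have heI' : e ∉ I' := he.2
    have hef : e ≠ f := fun h => heI' (h ▸ Set.mem_insert f _)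
    have heg : e ≠ g := fun h => hgJ (h ▸ heJ)
    have heI : e ∉ I := fun h => heI' (Set.mem_insert_of_mem _ ⟨h, heg⟩)
    obtain ⟨D, hD, hDs⟩ := not_indep_iff.mp (hcon e ⟨heJ, heI⟩)
    have heD : e ∈ SignVec.support D := by
      by_contra h
      refine hI D hD ?_
      intro x hx
      rcases hDs hx with h' | h'
      · exact absurd (h' ▸ hx) h
      · exact h'
    have hgD : g ∈ SignVec.support D := by
      by_contra h
      refine hInd' D hD ?_
      intro x hx
      rcases hDs hx with h' | h'
      · exact Set.mem_insert_iff.mpr (Or.inl h')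
      · have hxg : x ≠ g := fun h'' => h (h'' ▸ hx)
        exact Set.mem_insert_of_mem _ (Set.mem_insert_of_mem _ ⟨h', hxg⟩)
    have hne2 : SignVec.support C ≠ SignVec.support D := by
      intro h'
      have : f ∈ SignVec.support D := h' ▸ hfC
      rcases hDs this with h'' | h''
      · exact hef h''.symm
      · exact hfI h''
    obtain ⟨Z, hZ, hZs⟩ := circ_elim hC hD hne2 hgC hgD
    refine hInd' Z hZ ?_
    intro x hx
    have hx' := hZs hx
    have hxg : x ≠ g := fun h' => hx'.2 (h' ▸ rfl)
    rcases hx'.1 with h' | h'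
    · rcases hCs h' with h'' | h''
      · exact Set.mem_insert_of_mem _ (Set.mem_insert_iff.mpr (Or.inl h''))
      · exact Set.mem_insert_of_mem _ (Set.mem_insert_of_mem _ ⟨h'', hxg⟩)
    · rcases hDs h' with h'' | h''
      · exact Set.mem_insert_iff.mpr (Or.inl h'')
      · exact Set.mem_insert_of_mem _ (Set.mem_insert_of_mem _ ⟨h'', hxg⟩)


/-- local rank function -/
noncomputable def rk (M : OrientedMatroid E) (S : Set E) : ℕ :=
  sSup {k | ∃ T, T ⊆ S ∧ M.Indep T ∧ T.ncard = k}

lemma rkSet_nonempty (S : Set E) :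
    {k | ∃ T, T ⊆ S ∧ M.Indep T ∧ T.ncard = k}.Nonempty :=
  ⟨0, ∅, Set.empty_subset S, indep_empty, Set.ncard_empty E⟩

lemma rkSet_bddAbove (S : Set E) :
    BddAbove {k | ∃ T, T ⊆ S ∧ M.Indep T ∧ T.ncard = k} := by
  refine ⟨Fintype.card E, ?_⟩
  rintro k ⟨T, -, -, rfl⟩
  calc T.ncard ≤ (Set.univ : Set E).ncard := Set.ncard_le_ncard (Set.subset_univ T)
    _ = Fintype.card E := by rw [Set.ncard_univ, Nat.card_eq_fintype_card]

lemma le_rk {S T : Set E} (hT : T ⊆ S) (hI : M.Indep T) : T.ncard ≤ rk M S :=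
  le_csSup (rkSet_bddAbove S) ⟨T, hT, hI, rfl⟩

lemma rk_le {S : Set E} {m : ℕ} (h : ∀ T, T ⊆ S → M.Indep T → T.ncard ≤ m) :
    rk M S ≤ m := by
  refine csSup_le (rkSet_nonempty S) ?_
  rintro k ⟨T, hTS, hTI, rfl⟩
  exact h T hTS hTI

lemma exists_rk_basis (S : Set E) :
    ∃ T, T ⊆ S ∧ M.Indep T ∧ T.ncard = rk M S := by
  have := Nat.sSup_mem (rkSet_nonempty (M := M) S) (rkSet_bddAbove S)
  obtain ⟨T, h1, h2, h3⟩ := this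
  exact ⟨T, h1, h2, h3⟩

lemma rk_mono {S S' : Set E} (h : S ⊆ S') : rk M S ≤ rk M S' := by
  refine rk_le (fun T hTS hTI => le_rk (hTS.trans h) hTI)

lemma rk_le_ncard (S : Set E) : rk M S ≤ S.ncard :=
  rk_le (fun T hTS _ => Set.ncard_le_ncard hTS (Set.toFinite S))

/-- extension of an independent subset to one of full rank -/
lemma exists_extension : ∀ n : ℕ, ∀ I S : Set E, M.Indep I → I ⊆ S →
    rk M S - I.ncard = n → ∃ B, I ⊆ B ∧ B ⊆ S ∧ M.Indep B ∧ B.ncard = rk M S := by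
  intro n
  induction n with
  | zero =>
    intro I S hI hIS hn
    have h1 : I.ncard ≤ rk M S := le_rk hIS hI
    exact ⟨I, subset_rfl, hIS, hI, by omega⟩
  | succ n ih =>
    intro I S hI hIS hn
    obtain ⟨J, hJS, hJI, hJcard⟩ := exists_rk_basis (M := M) S
    have hlt : I.ncard < J.ncard := by omega
    obtain ⟨e, he, hInd⟩ := augment ((J \ I).ncard) I J hI hJI hlt rfl
    have heS : e ∈ S := hJS he.1
    have hcard : (insert e I).ncard = I.ncard + 1 :=
      Set.ncard_insert_of_notMem he.2 (Set.toFinite I)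
    obtain ⟨B, hB1, hB2, hB3, hB4⟩ := ih (insert e I) S hInd
      (Set.insert_subset heS hIS) (by omega)
    exact ⟨B, (Set.subset_insert e I).trans hB1, hB2, hB3, hB4⟩

/-- submodularity -/
lemma rk_submodular (A B : Set E) :
    rk M (A ∪ B) + rk M (A ∩ B) ≤ rk M A + rk M B := by
  obtain ⟨T0, hT0sub, hT0I, hT0card⟩ := exists_rk_basis (M := M) (A ∩ B)
  obtain ⟨T, hT1, hT2, hT3, hT4⟩ := exists_extension (rk M (A ∪ B) - T0.ncard) T0 (A ∪ B)
    hT0I (hT0sub.trans (Set.inter_subset_left.trans Set.subset_union_left)) rfl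
  have hkey : (T ∩ A).ncard + (T ∩ B).ncard = T.ncard + (T ∩ (A ∩ B)).ncard := by
    have h1 : (T ∩ A) ∪ (T ∩ B) = T := by
      rw [← Set.inter_union_distrib_left]
      exact Set.inter_eq_self_of_subset_left hT2
    have h2 : (T ∩ A) ∩ (T ∩ B) = T ∩ (A ∩ B) := by
      ext x; simp only [Set.mem_inter_iff]; tauto
    have := Set.ncard_union_add_ncard_inter (T ∩ A) (T ∩ B) (Set.toFinite _) (Set.toFinite _)
    rw [h1, h2] at this
    omega
  have hA : (T ∩ A).ncard ≤ rk M A :=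
    le_rk Set.inter_subset_right (indep_subset hT3 Set.inter_subset_left)
  have hB : (T ∩ B).ncard ≤ rk M B :=
    le_rk Set.inter_subset_right (indep_subset hT3 Set.inter_subset_left)
  have hT0T : T0 ⊆ T ∩ (A ∩ B) := Set.subset_inter hT1 hT0sub
  have h3 : rk M (A ∩ B) ≤ (T ∩ (A ∩ B)).ncard := by
    rw [← hT0card]
    exact Set.ncard_le_ncard hT0T (Set.toFinite _)
  omega

/-- circuit supports have rank `card - 1` : two inequalities -/
lemma circ_rk_lt {C : SignVec E} (hC : C ∈ M.circuits) :
    rk M (SignVec.support C) < (SignVec.support C).ncard := by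
  have hpos : 0 < (SignVec.support C).ncard :=
    (Set.ncard_pos (Set.toFinite _)).mpr (circ_supp_nonempty hC)
  have : rk M (SignVec.support C) ≠ (SignVec.support C).ncard := by
    intro h
    obtain ⟨T, hTs, hTI, hTc⟩ := exists_rk_basis (M := M) (SignVec.support C)
    have : T = SignVec.support C :=
      Set.eq_of_subset_of_ncard_le hTs (by omega) (Set.toFinite _)
    exact hTI C hC (this ▸ subset_rfl)
  have := rk_le_ncard (M := M) (SignVec.support C)
  omega

lemma circ_ncard_le_rk_add_one {C : SignVec E} (hC : C ∈ M.circuits) :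
    (SignVec.support C).ncard ≤ rk M (SignVec.support C) + 1 := by
  obtain ⟨x, hx⟩ := circ_supp_nonempty hC
  have hIndep : M.Indep (SignVec.support C \ {x}) := by
    intro D hD hsub
    have hDC : SignVec.support D ⊆ SignVec.support C := hsub.trans Set.diff_subset
    have heq := circ_supp_eq hD hC hDC
    have : x ∈ SignVec.support D := heq ▸ hx
    exact (hsub this).2 rfl
  have h1 : (SignVec.support C \ {x}).ncard ≤ rk M (SignVec.support C) :=
    le_rk Set.diff_subset hIndep
  have h2 := Set.ncard_diff_singleton_of_mem hx
  have hpos : 0 < (SignVec.support C).ncard :=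
    (Set.ncard_pos (Set.toFinite _)).mpr ⟨x, hx⟩
  omega




/-- a proper subset of a circuit support is independent -/
lemma circ_ssubset_indep {C : SignVec E} (hC : C ∈ M.circuits) {S : Set E}
    (hS : S ⊆ SignVec.support C) (hne : S ≠ SignVec.support C) : M.Indep S := by
  intro D hD hsub
  have := circ_supp_eq hD hC (hsub.trans hS)
  exact hne (Set.Subset.antisymm hS (this ▸ hsub))

/-- removing an element of a circuit inside `S` does not change the rank -/
lemma rk_diff_circuit {C : SignVec E} (hC : C ∈ M.circuits) {S : Set E} {x : E}
    (hCS : SignVec.support C ⊆ S) (hx : x ∈ SignVec.support C) :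
    rk M (S \ {x}) = rk M S := by
  refine le_antisymm (rk_mono Set.diff_subset) ?_
  have hxne : SignVec.support C \ {x} ≠ SignVec.support C := by
    intro h
    have hx' : x ∈ SignVec.support C \ {x} := h.symm ▸ hx
    exact hx'.2 rfl
  have hind : M.Indep (SignVec.support C \ {x}) :=
    circ_ssubset_indep hC Set.diff_subset hxne
  obtain ⟨B, hB1, hB2, hB3, hB4⟩ := exists_extension
    (rk M (S \ {x}) - (SignVec.support C \ {x}).ncard) (SignVec.support C \ {x}) (S \ {x})
    hind (Set.diff_subset_diff_left hCS) rfl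
  by_contra h
  push_neg at h
  obtain ⟨J, hJS, hJI, hJc⟩ := exists_rk_basis (M := M) S
  have hlt : B.ncard < J.ncard := by omega
  obtain ⟨e, he, hInd⟩ := augment ((J \ B).ncard) B J hB3 hJI hlt rfl
  by_cases hex : e = x
  · subst hex
    refine hInd C hC ?_
    intro y hy
    by_cases hyx : y = e
    · exact hyx ▸ Set.mem_insert e B
    · exact Set.mem_insert_of_mem _ (hB1 ⟨hy, hyx⟩)
  · have : (insert e B).ncard ≤ rk M (S \ {x}) :=
      le_rk (Set.insert_subset ⟨hJS he.1, hex⟩ hB2) hInd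
    rw [Set.ncard_insert_of_notMem he.2 (Set.toFinite B)] at this
    omega

/-- dependent sets have rank strictly below cardinality -/
lemma dep_rk_lt {S : Set E} (h : ¬ M.Indep S) : rk M S < S.ncard := by
  obtain ⟨C, hC, hCS⟩ := not_indep_iff.mp h
  have h1 : rk M S ≤ S.ncard := rk_le_ncard S
  rcases eq_or_lt_of_le h1 with heq | hlt
  · exfalso
    obtain ⟨T, hTs, hTI, hTc⟩ := exists_rk_basis (M := M) S
    have : T = S := Set.eq_of_subset_of_ncard_le hTs (by omega) (Set.toFinite _)
    exact hTI C hC (this ▸ hCS)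
  · exact hlt

/-- a set containing two circuits with distinct supports has nullity at least 2 -/
lemma two_circuits_rk {C₁ C₂ : SignVec E} (h1 : C₁ ∈ M.circuits) (h2 : C₂ ∈ M.circuits)
    {S : Set E} (hS1 : SignVec.support C₁ ⊆ S) (hS2 : SignVec.support C₂ ⊆ S)
    (hne : SignVec.support C₁ ≠ SignVec.support C₂) :
    rk M S + 2 ≤ S.ncard := by
  obtain ⟨x, hx1, hx2⟩ : ∃ x, x ∈ SignVec.support C₁ ∧ x ∉ SignVec.support C₂ := by
    by_contra h
    push_neg at h
    exact hne (circ_supp_eq h1 h2 h)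
  have e1 : rk M (S \ {x}) = rk M S := rk_diff_circuit h1 hS1 hx1
  have hdep : ¬ M.Indep (S \ {x}) := by
    rw [not_indep_iff]
    exact ⟨C₂, h2, fun y hy => ⟨hS2 hy, fun hyx => hx2 ((Set.mem_singleton_iff.mp hyx) ▸ hy)⟩⟩
  have h3 := dep_rk_lt hdep
  have h4 : (S \ {x}).ncard + 1 = S.ncard :=
    Set.ncard_diff_singleton_add_one (hS1 hx1) (Set.toFinite _)
  omega

/-- if removing `p` does not lower the rank, there is a circuit through `p` -/
lemma circuit_through {W : Set E} {p : E} (hp : p ∈ W) (hrk : rk M W ≤ rk M (W \ {p})) :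
    ∃ κ ∈ M.circuits, SignVec.support κ ⊆ W ∧ p ∈ SignVec.support κ := by
  obtain ⟨B, hBs, hBI, hBc⟩ := exists_rk_basis (M := M) (W \ {p})
  have hdep : ¬ M.Indep (insert p B) := by
    intro hind
    have : (insert p B).ncard ≤ rk M W :=
      le_rk (Set.insert_subset hp (hBs.trans Set.diff_subset)) hind
    rw [Set.ncard_insert_of_notMem (fun h => (hBs h).2 rfl) (Set.toFinite B)] at this
    omega
  obtain ⟨κ, hκ, hκs⟩ := not_indep_iff.mp hdep
  refine ⟨κ, hκ, fun y hy => ?_, ?_⟩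
  · rcases hκs hy with h | h
    · exact h ▸ hp
    · exact (hBs h).1
  · by_contra h
    refine hBI κ hκ (fun y hy => ?_)
    rcases hκs hy with h' | h'
    · exact absurd (h' ▸ hy) h
    · exact h'

/-- nullity is monotone: `|S'| - rk S' ≥ |S| - rk S` for `S ⊆ S'` -/
lemma nullity_mono {S S' : Set E} (h : S ⊆ S') :
    rk M S' + S.ncard ≤ rk M S + S'.ncard := by
  obtain ⟨B, hBs, hBI, hBc⟩ := exists_rk_basis (M := M) S
  obtain ⟨B', hB1, hB2, hB3, hB4⟩ := exists_extension
    (rk M S' - B.ncard) B S' hBI (hBs.trans h) rfl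
  have hint : B' ∩ S = B := by
    refine Set.Subset.antisymm ?_ (Set.subset_inter hB1 hBs)
    intro y hy
    by_contra hyB
    have hlt : B.ncard < (B' ∩ S).ncard := by
      have hsub : insert y B ⊆ B' ∩ S := Set.insert_subset hy (Set.subset_inter hB1 hBs)
      have := Set.ncard_le_ncard hsub (Set.toFinite _)
      rw [Set.ncard_insert_of_notMem hyB (Set.toFinite B)] at this
      omega
    have : (B' ∩ S).ncard ≤ rk M S :=
      le_rk Set.inter_subset_right (indep_subset hB3 Set.inter_subset_left)
    omega
  have hdiff : B' \ B ⊆ S' \ S := by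
    intro y hy
    refine ⟨hB2 hy.1, fun hyS => hy.2 ?_⟩
    rw [← hint]; exact ⟨hy.1, hyS⟩
  have h1 : (B' \ B).ncard ≤ (S' \ S).ncard := Set.ncard_le_ncard hdiff (Set.toFinite _)
  have h2 : (B' \ B).ncard + B.ncard = B'.ncard := by
    rw [Set.ncard_diff_add_ncard_of_subset hB1 (Set.toFinite _)]
  have h3 : (S' \ S).ncard + S.ncard = S'.ncard := by
    rw [Set.ncard_diff_add_ncard_of_subset h (Set.toFinite _)]
  omega

lemma mem_support {C : SignVec E} {e : E} : e ∈ SignVec.support C ↔ C e ≠ 0 := Iff.rfl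

lemma sign_neg_neg (x : SignType) : -(-x) = x := by cases x <;> rfl

lemma sign_neg_zero (x : SignType) : -x = 0 ↔ x = 0 := by cases x <;> simp

lemma sign_opp : ∀ a b : SignType, a ≠ 0 → b ≠ 0 → b ≠ a → b = -a := by decide

lemma sign_neg_eq_one : ∀ x : SignType, -x = 1 → x = -1 := by decide

lemma sign_neg_eq_negone : ∀ x : SignType, -x = -1 → x = 1 := by decide

lemma sign_self_neg : ∀ x : SignType, x = -x → x = 0 := by decide

lemma neg_neg' (P : SignVec E) : -(-P) = P := funext fun e => sign_neg_neg (P e)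

/-- weak elimination, containment form -/
lemma weak_elim_pair {P Q : SignVec E} (hP : P ∈ M.circuits) (hQ : Q ∈ M.circuits)
    (hne : P ≠ -Q) {f : E} (hPf : P f ≠ 0) (hQf : Q f = -(P f)) :
    ∃ Z ∈ M.circuits, Z f = 0 ∧ ∀ e, Z e ≠ 0 → Z e = P e ∨ Z e = Q e := by
  rcases sign_cases _ hPf with h1 | h1
  · have h2 : Q f = -1 := by rw [hQf, h1]
    obtain ⟨Z, hZ, hZf, hZ1, hZ2⟩ := M.elimination P hP Q hQ hne f h1 h2
    refine ⟨Z, hZ, hZf, fun e he => ?_⟩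
    rcases sign_cases _ he with h | h
    · rcases hZ1 e h with h' | h'
      · left; rw [h, h']
      · right; rw [h, h']
    · rcases hZ2 e h with h' | h'
      · left; rw [h, h']
      · right; rw [h, h']
  · have h1' : (-P) f = 1 := by show -(P f) = 1; rw [h1]; rfl
    have h2 : (-Q) f = -1 := by show -(Q f) = -1; rw [hQf, h1]; rfl
    have hne' : -P ≠ -(-Q) := by
      rw [neg_neg']
      intro h
      exact hne (by rw [← h, neg_neg'])
    obtain ⟨Z, hZ, hZf, hZ1, hZ2⟩ :=
      M.elimination (-P) (M.neg_mem P hP) (-Q) (M.neg_mem Q hQ) hne' f h1' h2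
    refine ⟨-Z, M.neg_mem Z hZ, by show -(Z f) = 0; rw [hZf]; rfl, fun e he => ?_⟩
    have hZe : Z e ≠ 0 := by
      intro h; apply he; show -(Z e) = 0; rw [h]; rfl
    rcases sign_cases _ hZe with h | h
    · rcases hZ1 e h with h' | h'
      · left
        rw [sign_neg_eq_one (P e) h']
        show -(Z e) = -1; rw [h]
      · right
        rw [sign_neg_eq_one (Q e) h']
        show -(Z e) = -1; rw [h]
    · rcases hZ2 e h with h' | h'
      · left
        rw [sign_neg_eq_negone (P e) h']
        show -(Z e) = 1; rw [h]; rfl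
      · right
        rw [sign_neg_eq_negone (Q e) h']
        show -(Z e) = 1; rw [h]; rfl

/-- strong elimination for modular pairs of circuits -/
lemma modular_exchange {P Q : SignVec E} (hP : P ∈ M.circuits) (hQ : Q ∈ M.circuits)
    (hne : SignVec.support P ≠ SignVec.support Q)
    (hmod : (SignVec.support P ∪ SignVec.support Q).ncard ≤
      rk M (SignVec.support P ∪ SignVec.support Q) + 2)
    {f p : E} (hPf : P f ≠ 0) (hQf : Q f = -(P f))
    (hp : p ∈ SignVec.support P ∪ SignVec.support Q)
    (hagree : ¬(P p ≠ 0 ∧ Q p = -(P p))) :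
    ∃ Z ∈ M.circuits, Z f = 0 ∧ Z p ≠ 0 ∧ ∀ e, Z e ≠ 0 → Z e = P e ∨ Z e = Q e := by
  set SP := SignVec.support P with hSP
  set SQ := SignVec.support Q with hSQ
  set U := SP ∪ SQ with hU
  have hQfne : Q f ≠ 0 := by
    rw [hQf]; intro h; exact hPf ((sign_neg_zero _).mp h)
  have hfP : f ∈ SP := hPf
  have hfQ : f ∈ SQ := hQfne
  have hfU : f ∈ U := Or.inl hfP
  have hPnQ : P ≠ Q := fun h => hne (by rw [hSP, hSQ, h])
  have hPnnQ : P ≠ -Q := by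
    intro h
    apply hne
    rw [hSP, hSQ, h, support_neg']
  have hpf : p ≠ f := by
    intro h
    exact hagree ⟨h ▸ hPf, h ▸ hQf⟩
  obtain ⟨Z, hZ, hZf, hZcont⟩ := weak_elim_pair hP hQ hPnnQ hPf hQf
  have hZsup : SignVec.support Z ⊆ U \ {f} := by
    intro y hy
    refine ⟨?_, fun hyf => (Set.mem_singleton_iff.mp hyf ▸ hy : Z f ≠ 0) hZf⟩
    rcases hZcont y hy with h | h
    · exact Or.inl (show P y ≠ 0 from h ▸ hy)
    · exact Or.inr (show Q y ≠ 0 from h ▸ hy)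
  by_cases hZp : Z p ≠ 0
  · exact ⟨Z, hZ, hZf, hZp, hZcont⟩
  push_neg at hZp
  exfalso
  set W := U \ {f} with hW
  have hncW : W.ncard + 1 = U.ncard := Set.ncard_diff_singleton_add_one hfU (Set.toFinite _)
  have hpW : p ∈ W := ⟨hp, hpf⟩
  by_cases hpP : P p = 0
  · -- p is only in the support of Q
    have hpQ : Q p ≠ 0 := by
      rcases hp with h | h
      · exact absurd hpP h
      · exact h
    have r1 : rk M (U \ {p}) = rk M U := rk_diff_circuit hQ Set.subset_union_right hpQ
    have hPsub : SP ⊆ U \ {p} := fun y hy =>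
      ⟨Or.inl hy, fun hyp => (Set.mem_singleton_iff.mp hyp ▸ hy : P p ≠ 0) hpP⟩
    have r2 : rk M ((U \ {p}) \ {f}) = rk M (U \ {p}) := rk_diff_circuit hP hPsub hfP
    have hsetEq : (U \ {p}) \ {f} = W \ {p} := by
      rw [hW]; ext y
      simp only [Set.mem_diff, Set.mem_singleton_iff]
      tauto
    have hrk1 : rk M (W \ {p}) = rk M U := by rw [← hsetEq, r2, r1]
    have hrkW : rk M W = rk M U :=
      le_antisymm (rk_mono Set.diff_subset) (hrk1 ▸ rk_mono Set.diff_subset)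
    obtain ⟨κ, hκ, hκW, hκp⟩ := circuit_through hpW (by rw [hrkW, ← hrk1])
    have hκZ : SignVec.support κ ≠ SignVec.support Z := by
      intro h
      have hpz : p ∈ SignVec.support Z := h ▸ hκp
      exact hpz hZp
    have := two_circuits_rk hκ hZ hκW hZsup hκZ
    omega
  · by_cases hpQ : Q p = 0
    · -- p is only in the support of P
      have r1 : rk M (U \ {p}) = rk M U := rk_diff_circuit hP Set.subset_union_left hpP
      have hQsub : SQ ⊆ U \ {p} := fun y hy =>
        ⟨Or.inr hy, fun hyp => (Set.mem_singleton_iff.mp hyp ▸ hy : Q p ≠ 0) hpQ⟩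
      have r2 : rk M ((U \ {p}) \ {f}) = rk M (U \ {p}) := rk_diff_circuit hQ hQsub hfQ
      have hsetEq : (U \ {p}) \ {f} = W \ {p} := by
        rw [hW]; ext y
        simp only [Set.mem_diff, Set.mem_singleton_iff]
        tauto
      have hrk1 : rk M (W \ {p}) = rk M U := by rw [← hsetEq, r2, r1]
      have hrkW : rk M W = rk M U :=
        le_antisymm (rk_mono Set.diff_subset) (hrk1 ▸ rk_mono Set.diff_subset)
      obtain ⟨κ, hκ, hκW, hκp⟩ := circuit_through hpW (by rw [hrkW, ← hrk1])
      have hκZ : SignVec.support κ ≠ SignVec.support Z := by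
        intro h
        have hpz : p ∈ SignVec.support Z := h ▸ hκp
        exact hpz hZp
      have := two_circuits_rk hκ hZ hκW hZsup hκZ
      omega
    · -- p in both supports, agreeing signs
      have hs : Q p = P p := by
        by_contra h
        exact hagree ⟨hpP, sign_opp _ _ hpP hpQ h⟩
      have hne2 : P ≠ -(-Q) := by rw [neg_neg']; exact hPnQ
      have hQp' : (-Q) p = -(P p) := by show -(Q p) = -(P p); rw [hs]
      obtain ⟨V, hV, hVp, hVcont⟩ :=
        weak_elim_pair hP (M.neg_mem Q hQ) hne2 hpP hQp'
      set Wp := U \ {p} with hWp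
      have rkWp : rk M Wp = rk M U := rk_diff_circuit hP Set.subset_union_left hpP
      have hncWp : Wp.ncard + 1 = U.ncard :=
        Set.ncard_diff_singleton_add_one (Or.inl hpP) (Set.toFinite _)
      have hVsup : SignVec.support V ⊆ Wp := by
        intro y hy
        refine ⟨?_, fun hyp => (Set.mem_singleton_iff.mp hyp ▸ hy : V p ≠ 0) hVp⟩
        rcases hVcont y hy with h | h
        · exact Or.inl (show P y ≠ 0 from h ▸ hy)
        · refine Or.inr (show Q y ≠ 0 from fun h0 => ?_)
          have : V y = 0 := by rw [h]; show -(Q y) = 0; rw [h0]; rfl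
          exact hy this
      have hZsup' : SignVec.support Z ⊆ Wp := by
        intro y hy
        exact ⟨(hZsup hy).1, fun hyp => (Set.mem_singleton_iff.mp hyp ▸ hy : Z p ≠ 0) hZp⟩
      have hVZ : SignVec.support V = SignVec.support Z := by
        by_contra h
        have := two_circuits_rk hV hZ hVsup hZsup' h
        omega
      obtain ⟨h₁, hh1Z, hh1Q⟩ : ∃ y, y ∈ SignVec.support Z ∧ y ∉ SQ := by
        by_contra h
        push_neg at h
        have heq := circ_supp_eq hZ hQ h
        have hfz : f ∈ SignVec.support Z := by rw [heq]; exact hfQ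
        exact hfz hZf
      obtain ⟨h₂, hh2Z, hh2P⟩ : ∃ y, y ∈ SignVec.support Z ∧ y ∉ SP := by
        by_contra h
        push_neg at h
        have heq := circ_supp_eq hZ hP h
        have hfz : f ∈ SignVec.support Z := by rw [heq]; exact hfP
        exact hfz hZf
      have hQh1 : Q h₁ = 0 := not_not.mp (fun h => hh1Q h)
      have hPh2 : P h₂ = 0 := not_not.mp (fun h => hh2P h)
      have hZh1 : Z h₁ = P h₁ := by
        rcases hZcont h₁ hh1Z with h | h
        · exact h
        · exact absurd (h ▸ hh1Z : Q h₁ ≠ 0) (not_not.mpr hQh1)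
      have hZh2 : Z h₂ = Q h₂ := by
        rcases hZcont h₂ hh2Z with h | h
        · exact absurd (h ▸ hh2Z : P h₂ ≠ 0) (not_not.mpr hPh2)
        · exact h
      have hVh1 : V h₁ = P h₁ := by
        have hy : h₁ ∈ SignVec.support V := hVZ ▸ hh1Z
        rcases hVcont h₁ hy with h | h
        · exact h
        · exfalso
          have : V h₁ = 0 := by rw [h]; show -(Q h₁) = 0; rw [hQh1]; rfl
          exact hy this
      have hVh2 : V h₂ = -(Q h₂) := by
        have hy : h₂ ∈ SignVec.support V := hVZ ▸ hh2Z
        rcases hVcont h₂ hy with h | h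
        · exact absurd (h ▸ hy : P h₂ ≠ 0) (not_not.mpr hPh2)
        · exact h
      rcases M.support_incomparable Z hZ V hV (hVZ ▸ subset_rfl) with h | h
      · have hq : Q h₂ = -(Q h₂) := by
          conv_lhs => rw [← hZh2, h, hVh2]
        have hQh2ne : Q h₂ ≠ 0 := by rw [← hZh2]; exact hh2Z
        exact hQh2ne (sign_self_neg _ hq)
      · have hpp : P h₁ = -(P h₁) := by
          conv_lhs => rw [← hZh1, h]
          show -(V h₁) = -(P h₁)
          rw [hVh1]
        have hPh1ne : P h₁ ≠ 0 := by rw [← hZh1]; exact hh1Z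
        exact hPh1ne (sign_self_neg _ hpp)


/-- iteratively repair the signs of a circuit to agree with `C` outside `T` -/
lemma fix_signs {C : SignVec E} (hC : C ∈ M.circuits) (T G : Set E)
    (hKG : SignVec.support C ⊆ G) (hGmod : G.ncard ≤ rk M G + 2)
    (hGT : ∀ e ∈ G, e ∉ T → e ∈ SignVec.support C) :
    ∀ d : ℕ, ∀ σ : SignVec E, σ ∈ M.circuits → SignVec.support σ ⊆ G →
    (∃ m, m ∈ SignVec.support C ∧ m ∉ T ∧ m ∉ SignVec.support σ) →
    (∃ p, p ∈ SignVec.support σ ∧ p ∉ T ∧ σ p = C p) →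
    {e | e ∈ SignVec.support σ ∧ e ∉ T ∧ σ e ≠ C e}.ncard = d →
    ∃ D ∈ M.circuits, SignVec.support D ⊆ G ∧
      (∃ m, m ∈ SignVec.support C ∧ m ∉ T ∧ m ∉ SignVec.support D) ∧
      (SignVec.support D \ T).Nonempty ∧
      (∀ e ∈ SignVec.support D \ T, D e = C e) := by
  intro d
  induction d using Nat.strong_induction_on with
  | _ d ih =>
    intro σ hσ hσG hm hp hd
    obtain ⟨p, hpσ, hpT, hpv⟩ := hp
    rcases Set.eq_empty_or_nonempty {e | e ∈ SignVec.support σ ∧ e ∉ T ∧ σ e ≠ C e}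
      with hΔ | hΔ
    · refine ⟨σ, hσ, hσG, hm, ⟨p, hpσ, hpT⟩, fun e he => ?_⟩
      by_contra hne
      have : e ∈ {e | e ∈ SignVec.support σ ∧ e ∉ T ∧ σ e ≠ C e} := ⟨he.1, he.2, hne⟩
      rw [hΔ] at this
      exact this
    · obtain ⟨f, hfσ, hfT, hfv⟩ := hΔ
      obtain ⟨m, hmC, hmT, hmσ⟩ := hm
      have hfC : f ∈ SignVec.support C := hGT f (hσG hfσ) hfT
      have hCf : C f = -(σ f) := sign_opp _ _ hfσ hfC (fun h => hfv h.symm)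
      have hnesupp : SignVec.support σ ≠ SignVec.support C := by
        intro h
        exact hmσ (h ▸ hmC)
      have hUG : SignVec.support σ ∪ SignVec.support C ⊆ G := Set.union_subset hσG hKG
      have hmod : (SignVec.support σ ∪ SignVec.support C).ncard ≤
          rk M (SignVec.support σ ∪ SignVec.support C) + 2 := by
        have := nullity_mono (M := M) hUG
        omega
      have hagree : ¬(σ p ≠ 0 ∧ C p = -(σ p)) := by
        rintro ⟨h1, h2⟩
        rw [hpv] at h2
        have : C p = 0 := sign_self_neg _ h2
        exact hpσ (hpv.trans this)
      obtain ⟨Z, hZ, hZf, hZp, hZcont⟩ :=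
        modular_exchange hσ hC hnesupp hmod hfσ hCf (Or.inl hpσ) hagree
      have hZG : SignVec.support Z ⊆ G := by
        intro y hy
        rcases hZcont y hy with h | h
        · exact hσG (show σ y ≠ 0 from h ▸ hy)
        · exact hKG (show C y ≠ 0 from h ▸ hy)
      have hZpv : Z p = C p := by
        rcases hZcont p hZp with h | h
        · rw [h, hpv]
        · exact h
      have hΔsub : {e | e ∈ SignVec.support Z ∧ e ∉ T ∧ Z e ≠ C e} ⊆
          {e | e ∈ SignVec.support σ ∧ e ∉ T ∧ σ e ≠ C e} \ {f} := by
        rintro e ⟨heZ, heT, hev⟩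
        have heσ : Z e = σ e := by
          rcases hZcont e heZ with h | h
          · exact h
          · exact absurd h hev
        refine ⟨⟨show σ e ≠ 0 from heσ ▸ heZ, heT, heσ ▸ hev⟩, fun hef => ?_⟩
        rw [Set.mem_singleton_iff] at hef
        exact (hef ▸ heZ : Z f ≠ 0) hZf
      have hcard : {e | e ∈ SignVec.support Z ∧ e ∉ T ∧ Z e ≠ C e}.ncard < d := by
        have h1 := Set.ncard_le_ncard hΔsub (Set.toFinite _)
        have h2 : ({e | e ∈ SignVec.support σ ∧ e ∉ T ∧ σ e ≠ C e} \ {f}).ncard + 1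
            = {e | e ∈ SignVec.support σ ∧ e ∉ T ∧ σ e ≠ C e}.ncard :=
          Set.ncard_diff_singleton_add_one ⟨hfσ, hfT, hfv⟩ (Set.toFinite _)
        omega
      exact ih _ hcard Z hZ hZG ⟨f, hfC, hfT, fun h => h hZf⟩ ⟨p, hZp, hpT, hZpv⟩ rfl

/-- **Refinement lemma**: if composing circuit `C` on top of a vector with support `T`
makes the nullity jump by at least 2, there is an intermediate circuit. -/
lemma refinement (T : Set E) {C : SignVec E} (hC : C ∈ M.circuits)
    (hjump : rk M (T ∪ SignVec.support C) + 2 ≤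
      rk M T + (SignVec.support C \ T).ncard) :
    ∃ D ∈ M.circuits, SignVec.support D ⊆ T ∪ SignVec.support C ∧
      (SignVec.support D \ T).Nonempty ∧
      (SignVec.support D \ T) ⊂ (SignVec.support C \ T) ∧
      ∀ e ∈ SignVec.support D \ T, D e = C e := by
  set K := SignVec.support C with hK
  set A := K \ T with hA
  have hAne : A.Nonempty := by
    rw [Set.nonempty_iff_ne_empty]
    intro h0
    have hsub : K ⊆ T := by rwa [hA, Set.diff_eq_empty] at h0
    have hTK : T ∪ K = T := Set.union_eq_self_of_subset_right hsub
    have h1 : (K \ T).ncard = 0 := by rw [← hA, h0]; exact Set.ncard_empty E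
    rw [hTK, h1] at hjump
    omega
  obtain ⟨k₀, hk₀⟩ := hAne
  have hk₀K : k₀ ∈ K := hk₀.1
  have hk₀T : k₀ ∉ T := hk₀.2
  -- basis of T containing K ∩ T
  have hKTind : M.Indep (K ∩ T) := by
    refine circ_ssubset_indep hC Set.inter_subset_left (fun h => ?_)
    have : k₀ ∈ K ∩ T := h ▸ hk₀K
    exact hk₀T this.2
  obtain ⟨BT, hBT1, hBT2, hBT3, hBT4⟩ := exists_extension
    (rk M T - (K ∩ T).ncard) (K ∩ T) T hKTind Set.inter_subset_right rfl
  -- extend K \ {k₀} inside (K \ {k₀}) ∪ BT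
  have hI0ind : M.Indep (K \ {k₀}) := by
    refine circ_ssubset_indep hC Set.diff_subset (fun h => ?_)
    have : k₀ ∈ K \ {k₀} := h.symm ▸ hk₀K
    exact this.2 rfl
  obtain ⟨B₂, hB21, hB22, hB23, hB24⟩ := exists_extension
    (rk M ((K \ {k₀}) ∪ BT) - (K \ {k₀}).ncard) (K \ {k₀}) ((K \ {k₀}) ∪ BT)
    hI0ind Set.subset_union_left rfl
  have hIBsub : (K \ {k₀}) ∪ BT ⊆ T ∪ K :=
    Set.union_subset (Set.diff_subset.trans Set.subset_union_right)
      (hBT2.trans Set.subset_union_left)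
  have hrkIB : rk M ((K \ {k₀}) ∪ BT) + 2 ≤ rk M T + A.ncard := by
    have := rk_mono (M := M) hIBsub
    omega
  have hIBeq : (K \ {k₀}) ∪ BT = BT ∪ (A \ {k₀}) := by
    ext x
    constructor
    · rintro (⟨hxK, hxk₀⟩ | hx)
      · by_cases hxT : x ∈ T
        · exact Or.inl (hBT1 ⟨hxK, hxT⟩)
        · exact Or.inr ⟨⟨hxK, hxT⟩, hxk₀⟩
      · exact Or.inl hx
    · rintro (hx | ⟨⟨hxK, hxT⟩, hxk₀⟩)
      · exact Or.inr hx
      · exact Or.inl ⟨hxK, hxk₀⟩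
  have hdisj : Disjoint BT (A \ {k₀}) := by
    refine Set.disjoint_left.mpr (fun x hx1 hx2 => ?_)
    exact hx2.1.2 (hBT2 hx1)
  have hncIB : ((K \ {k₀}) ∪ BT).ncard = rk M T + (A \ {k₀}).ncard := by
    rw [hIBeq, Set.ncard_union_eq hdisj (Set.toFinite _) (Set.toFinite _), hBT4]
  have hncA : (A \ {k₀}).ncard + 1 = A.ncard :=
    Set.ncard_diff_singleton_add_one hk₀ (Set.toFinite _)
  -- find w
  have hssub : B₂ ⊂ (K \ {k₀}) ∪ BT := by
    refine HasSubset.Subset.ssubset_of_ne hB22 (fun h => ?_)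
    have : B₂.ncard = ((K \ {k₀}) ∪ BT).ncard := by rw [h]
    omega
  obtain ⟨w, hwIB, hwB2⟩ := Set.exists_of_ssubset hssub
  have hwBT : w ∈ BT := by
    rcases hwIB with h | h
    · exact absurd (hB21 h) hwB2
    · exact h
  have hwT : w ∈ T := hBT2 hwBT
  -- circuit in B₂ ∪ {w}
  have hdep : ¬ M.Indep (insert w B₂) := by
    intro hind
    have h1 : (insert w B₂).ncard ≤ rk M ((K \ {k₀}) ∪ BT) :=
      le_rk (Set.insert_subset hwIB hB22) hind
    rw [Set.ncard_insert_of_notMem hwB2 (Set.toFinite _)] at h1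
    omega
  obtain ⟨κ, hκc, hκs⟩ := not_indep_iff.mp hdep
  -- G and its properties
  set G := insert w (insert k₀ B₂) with hG
  have hKG : K ⊆ G := by
    intro x hx
    by_cases hxk : x = k₀
    · exact hxk ▸ Set.mem_insert_of_mem _ (Set.mem_insert k₀ B₂)
    · exact Set.mem_insert_of_mem _ (Set.mem_insert_of_mem _ (hB21 ⟨hx, hxk⟩))
  have hκG : SignVec.support κ ⊆ G := fun y hy => by
    rcases hκs hy with h | h
    · exact h ▸ Set.mem_insert w _
    · exact Set.mem_insert_of_mem _ (Set.mem_insert_of_mem _ h)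
  have hGTK : G ⊆ T ∪ K := by
    intro x hx
    rcases hx with h | h | h
    · exact Or.inl (h ▸ hwT)
    · exact Or.inr (h ▸ hk₀K)
    · exact hIBsub (hB22 h)
  have hGT : ∀ e ∈ G, e ∉ T → e ∈ K := by
    intro e he heT
    rcases hGTK he with h | h
    · exact absurd h heT
    · exact h
  have hGmod : G.ncard ≤ rk M G + 2 := by
    have h1 : B₂.ncard ≤ rk M G :=
      le_rk (fun y hy => Set.mem_insert_of_mem _ (Set.mem_insert_of_mem _ hy)) hB23
    have h2 : (insert k₀ B₂).ncard ≤ B₂.ncard + 1 := Set.ncard_insert_le k₀ B₂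
    have h3 : G.ncard ≤ (insert k₀ B₂).ncard + 1 := Set.ncard_insert_le w _
    omega
  -- k₀ not in κ
  have hκk₀ : k₀ ∉ SignVec.support κ := by
    intro h
    rcases hκs h with h' | h'
    · exact hk₀T (h' ▸ hwT)
    · rcases hB22 h' with h'' | h''
      · exact h''.2 rfl
      · exact hk₀T (hBT2 h'')
  -- κ has an element outside T
  obtain ⟨p, hpκ, hpT⟩ : ∃ p, p ∈ SignVec.support κ ∧ p ∉ T := by
    by_contra h
    push_neg at h
    have hκBT : SignVec.support κ ⊆ BT := by
      intro y hy
      rcases hκs hy with h' | h'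
      · exact h' ▸ hwBT
      · rcases hB22 h' with h'' | h''
        · exact hBT1 ⟨h''.1, h y hy⟩
        · exact h''
    exact (indep_subset hBT3 hκBT) κ hκc subset_rfl
  have hpK : p ∈ K := hGT p (hκG hpκ) hpT
  have hpC : C p ≠ 0 := hpK
  -- orient κ so that it agrees with C at p
  obtain ⟨σ, hσc, hσsupp, hσp⟩ : ∃ σ ∈ M.circuits,
      SignVec.support σ = SignVec.support κ ∧ σ p = C p := by
    by_cases h : κ p = C p
    · exact ⟨κ, hκc, rfl, h⟩
    · refine ⟨-κ, M.neg_mem κ hκc, support_neg' κ, ?_⟩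
      have := sign_opp _ _ hpC hpκ h
      show -(κ p) = C p
      rw [this, sign_neg_neg]
  obtain ⟨D, hD, hDG, ⟨m, hmC, hmT, hmD⟩, hDvis, hDagree⟩ :=
    fix_signs hC T G hKG hGmod hGT
      ({e | e ∈ SignVec.support σ ∧ e ∉ T ∧ σ e ≠ C e}.ncard) σ hσc
      (hσsupp ▸ hκG) ⟨k₀, hk₀K, hk₀T, hσsupp ▸ hκk₀⟩
      ⟨p, hσsupp ▸ hpκ, hpT, hσp⟩ rfl
  refine ⟨D, hD, hDG.trans hGTK, hDvis, ?_, hDagree⟩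
  refine HasSubset.Subset.ssubset_of_ne ?_ ?_
  · intro y hy
    exact ⟨hGT y (hDG hy.1) hy.2, hy.2⟩
  · intro h
    have : m ∈ SignVec.support D \ T := h.symm ▸ (⟨hmC, hmT⟩ : m ∈ K \ T)
    exact hmD this.1


variable {E : Type*} [Fintype E] [DecidableEq E] {M : OrientedMatroid E}

lemma isVector_zero : M.IsVector 0 := ⟨[], by simp, rfl⟩

lemma supp_ssubset_of_lt {X Y : SignVec E} (h : SignVec.lt X Y) :
    SignVec.support X ⊂ SignVec.support Y :=
  ⟨support_mono_le h.1, fun hsub => h.2 (eq_of_le_of_support_subset h.1 hsub)⟩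

lemma lt_of_le_of_lt' {A B C : SignVec E} (h1 : SignVec.le A B) (h2 : SignVec.lt B C) :
    SignVec.lt A C :=
  ⟨le_trans' h1 h2.1, fun h => h2.2 (le_antisymm' h2.1 (h ▸ h1))⟩

/-- the defining set for `height` -/
def hset (M : OrientedMatroid E) (X : SignVec E) : Set ℕ :=
  {h | ∃ c : Fin (h+1) → SignVec E, (∀ i, M.IsVector (c i)) ∧ c 0 = 0 ∧
    c (Fin.last h) = X ∧ ∀ i j : Fin (h+1), i < j → SignVec.lt (c i) (c j)}

lemma height_eq (X : SignVec E) : M.height X = sSup (hset M X) := rfl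

lemma hset_le_card {X : SignVec E} {h : ℕ} (hh : h ∈ hset M X) : h ≤ Fintype.card E := by
  obtain ⟨c, hc1, hc2, hc3, hc4⟩ := hh
  have key : ∀ k : ℕ, ∀ hk : k ≤ h, k ≤ (SignVec.support (c ⟨k, by omega⟩)).ncard := by
    intro k
    induction k with
    | zero => intro _; exact Nat.zero_le _
    | succ k ihk =>
      intro hk
      have h1 := ihk (by omega)
      have hlt := hc4 ⟨k, by omega⟩ ⟨k+1, by omega⟩ (by simp [Fin.mk_lt_mk])
      have h2 := Set.ncard_lt_ncard (supp_ssubset_of_lt hlt) (Set.toFinite _)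
      omega
  have h1 := key h le_rfl
  have h2 : (SignVec.support (c ⟨h, by omega⟩)).ncard ≤ Fintype.card E := by
    have := Set.ncard_le_ncard (Set.subset_univ (SignVec.support (c ⟨h, by omega⟩)))
      (Set.toFinite _)
    rwa [Set.ncard_univ, Nat.card_eq_fintype_card] at this
  omega

lemma hset_bddAbove (X : SignVec E) : BddAbove (hset M X) :=
  ⟨Fintype.card E, fun _ hh => hset_le_card hh⟩

lemma hset_nonempty {X : SignVec E} (hX : M.IsVector X) : (hset M X).Nonempty := by
  by_cases h0 : X = 0
  · refine ⟨0, fun _ => 0, fun _ => isVector_zero, rfl, h0.symm, fun i j hij => ?_⟩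
    exfalso
    have hi : (i : ℕ) < 1 := i.isLt
    have hj : (j : ℕ) < 1 := j.isLt
    have : (i : ℕ) < (j : ℕ) := hij
    omega
  · refine ⟨1, fun i => if (i : ℕ) = 0 then 0 else X, ?_, by simp, by simp [Fin.last], ?_⟩
    · intro i
      by_cases h : (i : ℕ) = 0 <;> simp [h, isVector_zero, hX]
    · intro i j hij
      have hi : (i : ℕ) < 2 := i.isLt
      have hj : (j : ℕ) < 2 := j.isLt
      have hij' : (i : ℕ) < (j : ℕ) := hij
      have hi0 : (i : ℕ) = 0 := by omega
      have hj1 : (j : ℕ) = 1 := by omega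
      simp only [hi0, hj1, if_pos rfl, if_neg one_ne_zero]
      exact ⟨fun e he => absurd rfl he, fun h => h0 h.symm⟩

lemma height_succ_le {X' X : SignVec E} (hX' : M.IsVector X') (hX : M.IsVector X)
    (hlt : SignVec.lt X' X) : M.height X' + 1 ≤ M.height X := by
  have hmem : M.height X' ∈ hset M X' :=
    height_eq X' ▸ Nat.sSup_mem (hset_nonempty hX') (hset_bddAbove X')
  set h' := M.height X' with hh'
  obtain ⟨c', hc1, hc2, hc3, hc4⟩ := hmem
  have hnew : h' + 1 ∈ hset M X := by
    refine ⟨fun i => if h : (i : ℕ) ≤ h' then c' ⟨i, by omega⟩ else X, ?_, ?_, ?_, ?_⟩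
    · intro i
      by_cases h : (i : ℕ) ≤ h' <;> simp [h, hc1, hX]
    · simp only [Fin.val_zero, Nat.zero_le, dif_pos]
      exact hc2
    · have : ¬ ((Fin.last (h'+1) : ℕ) ≤ h') := by simp [Fin.last]
      simp [this]
    · intro i j hij
      have hij' : (i : ℕ) < (j : ℕ) := hij
      by_cases hi : (i : ℕ) ≤ h'
      · by_cases hj : (j : ℕ) ≤ h'
        · simp only [dif_pos hi, dif_pos hj]
          exact hc4 _ _ (by simp [Fin.mk_lt_mk, hij'])
        · simp only [dif_pos hi, dif_neg hj]
          have hle : SignVec.le (c' ⟨i, by omega⟩) X' := by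
            by_cases hih : (i : ℕ) = h'
            · have : (⟨(i : ℕ), by omega⟩ : Fin (h'+1)) = Fin.last h' := by
                simp [Fin.ext_iff, hih, Fin.last]
              rw [this, hc3]
              exact fun e he => rfl
            · have hlt' := hc4 ⟨i, by omega⟩ (Fin.last h') (by
                simp only [Fin.lt_def, Fin.last]
                omega)
              rw [hc3] at hlt'
              exact hlt'.1
          exact lt_of_le_of_lt' hle hlt
      · by_cases hj : (j : ℕ) ≤ h'
        · omega
        · exfalso
          have : (i : ℕ) < h' + 2 := i.isLt
          have : (j : ℕ) < h' + 2 := j.isLt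
          omega
  calc h' + 1 ≤ sSup (hset M X) := le_csSup (hset_bddAbove X) hnew
    _ = M.height X := (height_eq X).symm

/-- measure for the refinement induction -/
noncomputable def mu (l : List (SignVec E)) : ℕ :=
  ∑ i ∈ Finset.range l.length,
    ((SignVec.support ((l.take (i+1)).foldr SignVec.comp 0) \
      SignVec.support ((l.take i).foldr SignVec.comp 0)).ncard)^2

lemma mu_append (l : List (SignVec E)) (C : SignVec E) :
    mu (l ++ [C]) = mu l +
      ((SignVec.support ((l ++ [C]).foldr SignVec.comp 0) \
        SignVec.support (l.foldr SignVec.comp 0)).ncard)^2 := by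
  unfold mu
  rw [List.length_append, List.length_singleton, Finset.sum_range_succ]
  congr 1
  · refine Finset.sum_congr rfl (fun i hi => ?_)
    rw [Finset.mem_range] at hi
    rw [List.take_append_of_le_length (by omega), List.take_append_of_le_length (by omega)]
  · have h1 : (l ++ [C]).take (l.length + 1) = l ++ [C] := by
      have hlen : (l ++ [C]).length = l.length + 1 := by simp
      rw [← hlen, List.take_length]
    have h2 : (l ++ [C]).take l.length = l := List.take_left
    rw [h1, h2]

lemma foldr_comp_append (l₁ l₂ : List (SignVec E)) :
    (l₁ ++ l₂).foldr SignVec.comp 0 =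
      SignVec.comp (l₁.foldr SignVec.comp 0) (l₂.foldr SignVec.comp 0) := by
  rw [List.foldr_append, foldr_comp_shift]

lemma thmB : ∀ m : ℕ, ∀ l : List (SignVec E), (∀ Z ∈ l, Z ∈ M.circuits) → mu l ≤ m →
    (SignVec.support (l.foldr SignVec.comp 0)).ncard ≤
      rk M (SignVec.support (l.foldr SignVec.comp 0)) +
        M.height (l.foldr SignVec.comp 0) := by
  intro m
  induction m using Nat.strong_induction_on with
  | _ m ihm =>
    intro l
    induction l using List.reverseRecOn with
    | nil =>
      intro _ _
      simp only [List.foldr_nil]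
      rw [support_zero]
      simp
    | append_singleton l' C ihl =>
      intro hcirc hmu
      have hC : C ∈ M.circuits := hcirc C (by simp)
      have hcirc' : ∀ Z ∈ l', Z ∈ M.circuits := fun Z hZ => hcirc Z (by simp [hZ])
      set X' : SignVec E := l'.foldr SignVec.comp 0 with hX'
      set T : Set E := SignVec.support X' with hT
      set K : Set E := SignVec.support C with hKdef
      set A : Set E := K \ T with hAdef
      have hXeq : (l' ++ [C]).foldr SignVec.comp 0 = SignVec.comp X' C :=
        foldr_comp_append_single l' C
      have hsupp : SignVec.support (SignVec.comp X' C) = T ∪ K := support_comp X' C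
      have hmuapp : mu (l' ++ [C]) = mu l' + (A.ncard)^2 := by
        rw [mu_append, hXeq, ← hX', hsupp]
        congr 2
        rw [hAdef, Set.union_diff_left]
      have hmul' : mu l' ≤ m := by omega
      rw [hXeq, hsupp]
      by_cases hA : A = ∅
      · have hXX : SignVec.comp X' C = X' := by
          funext e
          show (if X' e = 0 then C e else X' e) = X' e
          split
          · rename_i h0
            by_cases hCe : C e = 0
            · rw [hCe, h0]
            · exfalso
              have heA : e ∈ A := ⟨hCe, fun h => h h0⟩
              rw [hA] at heA
              exact heA
          · rfl
        have hTK : T ∪ K = T := by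
          apply Set.union_eq_self_of_subset_right
          intro x hx
          by_contra hxT
          have : x ∈ A := ⟨hx, hxT⟩
          rw [hA] at this
          exact this
        rw [hXX, hTK]
        exact ihl hcirc' hmul'
      · have hAne : A.Nonempty := Set.nonempty_iff_ne_empty.mpr hA
        by_cases hj : rk M (T ∪ K) + 2 ≤ rk M T + A.ncard
        · -- big jump: refine the list
          obtain ⟨D, hD, hDsub, hDne, hDss, hDagr⟩ := refinement T hC hj
          have heq2 : (l' ++ [D, C]).foldr SignVec.comp 0 = SignVec.comp X' C := by
            rw [foldr_comp_append]
            show SignVec.comp X' ((([D, C]) : List (SignVec E)).foldr SignVec.comp 0) = _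
            have : (([D, C]) : List (SignVec E)).foldr SignVec.comp 0 =
                SignVec.comp D C := by
              simp only [List.foldr_cons, List.foldr_nil]
              rw [comp_zero]
            rw [this]
            funext e
            show (if X' e = 0 then (SignVec.comp D C) e else X' e) =
              (if X' e = 0 then C e else X' e)
            split
            · rename_i h0
              show (if D e = 0 then C e else D e) = C e
              split
              · rfl
              · rename_i hDe
                exact hDagr e ⟨hDe, fun h => h h0⟩
            · rfl
          have hcirc'' : ∀ Z ∈ l' ++ [D, C], Z ∈ M.circuits := by
            intro Z hZ
            rw [List.mem_append] at hZ
            rcases hZ with h | h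
            · exact hcirc' Z h
            · rw [List.mem_cons, List.mem_singleton] at h
              rcases h with h | h
              · exact h ▸ hD
              · exact h ▸ hC
          have hmu2 : mu (l' ++ [D, C]) < mu (l' ++ [C]) := by
            have hsplit : l' ++ [D, C] = (l' ++ [D]) ++ [C] := by simp
            have hfold1 : (l' ++ [D]).foldr SignVec.comp 0 = SignVec.comp X' D :=
              foldr_comp_append_single l' D
            have hmu3 : mu ((l' ++ [D]) ++ [C]) = mu (l' ++ [D]) +
                ((SignVec.support (((l' ++ [D]) ++ [C]).foldr SignVec.comp 0) \
                  SignVec.support ((l' ++ [D]).foldr SignVec.comp 0)).ncard)^2 :=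
              mu_append _ C
            have hmu4 : mu (l' ++ [D]) = mu l' +
                ((SignVec.support D \ T).ncard)^2 := by
              rw [mu_append, hfold1, ← hX', support_comp, Set.union_diff_left]
            have hsetup : SignVec.support (((l' ++ [D]) ++ [C]).foldr SignVec.comp 0) \
                SignVec.support ((l' ++ [D]).foldr SignVec.comp 0) =
                A \ (SignVec.support D \ T) := by
              rw [← hsplit, heq2, hfold1, hsupp, support_comp]
              ext x
              simp only [Set.mem_diff, Set.mem_union, hAdef, hKdef, hT]
              constructor
              · rintro ⟨h1, h2⟩
                push_neg at h2
                rcases h1 with h | h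
                · exact absurd h h2.1
                · exact ⟨⟨h, h2.1⟩, fun hh => h2.2 hh.1⟩
              · rintro ⟨⟨h1, h2⟩, h3⟩
                refine ⟨Or.inr h1, ?_⟩
                push_neg
                exact ⟨h2, fun hD0 => by
                  exfalso
                  exact h3 ⟨hD0, h2⟩⟩
            have hsum : (A \ (SignVec.support D \ T)).ncard
                + (SignVec.support D \ T).ncard = A.ncard :=
              Set.ncard_diff_add_ncard_of_subset hDss.1 (Set.toFinite _)
            have hv1pos : 1 ≤ (SignVec.support D \ T).ncard :=
              (Set.ncard_pos (Set.toFinite _)).mpr hDne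
            have hv2pos : 1 ≤ (A \ (SignVec.support D \ T)).ncard := by
              refine (Set.ncard_pos (Set.toFinite _)).mpr ?_
              obtain ⟨x, hx1, hx2⟩ := Set.exists_of_ssubset hDss
              exact ⟨x, hx1, hx2⟩
            rw [hsplit, hmu3, hmu4, hsetup, hmuapp]
            have hkey : (SignVec.support D \ T).ncard^2
                + (A \ (SignVec.support D \ T)).ncard^2 < A.ncard^2 := by
              nlinarith
            omega
          have hlt : mu (l' ++ [D, C]) < m := by omega
          have := ihm (mu (l' ++ [D, C])) hlt (l' ++ [D, C]) hcirc'' le_rfl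
          rw [heq2, hsupp] at this
          exact this
        · -- small jump
          push_neg at hj
          have ih' := ihl hcirc' hmul'
          obtain ⟨a, haK, haT⟩ := hAne
          have hX'a : X' a = 0 := not_not.mp haT
          have hXa : SignVec.comp X' C a = C a := by
            show (if X' a = 0 then C a else X' a) = C a
            rw [if_pos hX'a]
          have hne : X' ≠ SignVec.comp X' C := by
            intro h
            exact haK (by rw [← hXa, ← h]; exact hX'a)
          have hltv : SignVec.lt X' (SignVec.comp X' C) := ⟨le_comp X' C, hne⟩
          have hstep : M.height X' + 1 ≤ M.height (SignVec.comp X' C) :=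
            height_succ_le ⟨l', hcirc', rfl⟩ ⟨l' ++ [C], hcirc, hXeq.symm⟩ hltv
          have hTK : (T ∪ K).ncard = T.ncard + A.ncard := by
            rw [hAdef, ← Set.union_diff_self (s := T) (t := K),
              Set.ncard_union_eq Set.disjoint_sdiff_right (Set.toFinite _) (Set.toFinite _)]
          omega

lemma rank_bddAbove : BddAbove {k | ∃ S : Set E, M.Indep S ∧ S.ncard = k} := by
  refine ⟨Fintype.card E, ?_⟩
  rintro k ⟨S, -, rfl⟩
  calc S.ncard ≤ (Set.univ : Set E).ncard := Set.ncard_le_ncard (Set.subset_univ S)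
    _ = Fintype.card E := by rw [Set.ncard_univ, Nat.card_eq_fintype_card]

lemma rk_le_rank (S : Set E) : rk M S ≤ M.rank := by
  refine csSup_le (rkSet_nonempty S) ?_
  rintro k ⟨T, hT1, hT2, hT3⟩
  exact le_csSup rank_bddAbove ⟨T, hT2, hT3⟩

end OM5

/-- For every vector `X` of an oriented matroid `M`,
`|supp(X)| ≤ rk(M) + height(X)`. -/
theorem support_card_le_rank_add_height {E : Type*} [Fintype E] [DecidableEq E]
    (M : OrientedMatroid E) (X : SignVec E) (hX : M.IsVector X) :
    (SignVec.support X).ncard ≤ M.rank + M.height X := by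
  obtain ⟨l, hl, hXl⟩ := hX
  subst hXl
  have h1 := OM5.thmB (M := M) (OM5.mu l) l hl le_rfl
  have h2 := OM5.rk_le_rank (M := M) (SignVec.support (l.foldr SignVec.comp 0))
  omega
end

section
/- Let k be a positive integer and {K^I}_{I ⊆ [k]} a family of simplicial complexes with K^I a subcomplex of K^J whenever I ⊆ J. Suppose K^I is homologically (|I|-2)-connected (with Z/2 coefficients) for every I. Let λ be a labeling of the vertices of K^{[k]} by elements of [k] such that λ(v) ∈ I whenever v is a vertex of K^I. Then K^{[k]} contains a (k-1)-dimensional simplex whose k vertices receive k distinct labels under λ. -/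
/-- An (abstract) simplicial complex on vertex set `V`, given as its set of faces:
downward closed and containing the empty face. -/
def IsComplex {V : Type*} (K : Set (Finset V)) : Prop :=
  ∅ ∈ K ∧ ∀ s ∈ K, ∀ t ⊆ s, t ∈ K

/-- The simplicial boundary operator over `ℤ/2`, on the augmented chain complex: a chain is a
finitely supported function on faces (a face of cardinality `d` has degree `d - 1`; the empty
face spans the degree `-1` part, so that `bd` in degree `0` is the augmentation map). -/
noncomputable def bd {V : Type*} [DecidableEq V] (c : Finset V →₀ ZMod 2) :
    Finset V →₀ ZMod 2 :=
  c.sum fun s a => a • ∑ v ∈ s, Finsupp.single (s.erase v) (1 : ZMod 2)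

/-- `c` is a chain of the complex `K` supported on faces of cardinality `d`
(i.e. a simplicial `(d-1)`-chain of `K` over `ℤ/2`). -/
def IsChainOn {V : Type*} (K : Set (Finset V)) (d : ℕ) (c : Finset V →₀ ZMod 2) : Prop :=
  ∀ s ∈ c.support, s ∈ K ∧ s.card = d

/-- `K` is homologically `m`-connected over `ℤ/2`: its reduced homology vanishes in all
degrees `≤ m` (degree `d - 1` corresponds to faces of cardinality `d`); `(-1)`-connected
means non-empty, and `m ≤ -2` demands nothing. -/
def HomConnected {V : Type*} [DecidableEq V] (K : Set (Finset V)) (m : ℤ) : Prop :=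
  ∀ d : ℕ, (d : ℤ) ≤ m + 1 → ∀ c, IsChainOn K d c → bd c = 0 →
    ∃ b, IsChainOn K (d + 1) b ∧ bd b = c

open Finsupp in
noncomputable def bdHom (V : Type*) [DecidableEq V] :
    (Finset V →₀ ZMod 2) →ₗ[ZMod 2] (Finset V →₀ ZMod 2) :=
  Finsupp.lsum (ZMod 2) fun s => LinearMap.toSpanSingleton (ZMod 2) _
    (∑ v ∈ s, Finsupp.single (s.erase v) (1 : ZMod 2))

lemma bd_eq {V : Type*} [DecidableEq V] (c : Finset V →₀ ZMod 2) : bd c = bdHom V c := by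
  simp only [bd, bdHom, Finsupp.lsum_apply]
  rfl

lemma bd_single {V : Type*} [DecidableEq V] (s : Finset V) (a : ZMod 2) :
    bd (Finsupp.single s a) = a • ∑ v ∈ s, Finsupp.single (s.erase v) (1 : ZMod 2) := by
  unfold bd
  exact Finsupp.sum_single_index (by simp)

open Classical in
noncomputable def phiHom {V : Type*} [DecidableEq V] {k : ℕ} (lam : V → Fin k) :
    (Finset V →₀ ZMod 2) →ₗ[ZMod 2] (Finset (Fin k) →₀ ZMod 2) :=
  Finsupp.lsum (ZMod 2) fun s =>
    if Set.InjOn lam ↑s then Finsupp.lsingle (s.image lam) else 0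

lemma phi_single {V : Type*} [DecidableEq V] {k : ℕ} (lam : V → Fin k) (s : Finset V)
    (a : ZMod 2) :
    phiHom lam (Finsupp.single s a) =
      if Set.InjOn lam ↑s then Finsupp.single (s.image lam) a else 0 := by
  classical
  unfold phiHom
  rw [Finsupp.lsum_apply, Finsupp.sum_single_index (by simp)]
  split_ifs <;> simp

section Comb
variable {V : Type*} [DecidableEq V] {k : ℕ} {lam : V → Fin k}

lemma image_erase_of_injOn {s : Finset V} (h : Set.InjOn lam ↑s) {v : V} (hv : v ∈ s) :
    (s.erase v).image lam = (s.image lam).erase (lam v) := by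
  ext j
  simp only [Finset.mem_image, Finset.mem_erase]
  constructor
  · rintro ⟨x, ⟨hxv, hxs⟩, rfl⟩
    exact ⟨fun he => hxv (h hxs hv he), x, hxs, rfl⟩
  · rintro ⟨hj, x, hx, rfl⟩
    exact ⟨x, ⟨fun he => hj (by rw [he]), hx⟩, rfl⟩

lemma not_injOn_exists {s : Finset V} (h : ¬ Set.InjOn lam ↑s) :
    ∃ a ∈ s, ∃ b ∈ s, a ≠ b ∧ lam a = lam b := by
  simp only [Set.InjOn, not_forall, Finset.mem_coe] at h
  obtain ⟨a, ha, b, hb, hab, hne⟩ := h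
  exact ⟨a, ha, b, hb, hne, hab⟩

lemma injOn_erase_swap {s : Finset V} {u w : V} (hu : u ∈ s) (hw : w ∈ s) (huw : u ≠ w)
    (hl : lam u = lam w) (h : Set.InjOn lam ↑(s.erase u)) : Set.InjOn lam ↑(s.erase w) := by
  intro a ha b hb hab
  simp only [Finset.coe_erase, Set.mem_diff, Set.mem_singleton_iff, Finset.mem_coe] at ha hb
  by_cases hau : a = u
  · by_cases hbu : b = u
    · rw [hau, hbu]
    · exfalso
      have hbe : b ∈ ↑(s.erase u) := by
        simp [Finset.mem_erase, hbu, hb.1]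
      have hwe : w ∈ ↑(s.erase u) := by
        simp [Finset.mem_erase, (Ne.symm huw), hw]
      have : b = w := h hbe hwe (by rw [← hab, hau, hl])
      exact hb.2 this
  · by_cases hbu : b = u
    · exfalso
      have hae : a ∈ ↑(s.erase u) := by simp [Finset.mem_erase, hau, ha.1]
      have hwe : w ∈ ↑(s.erase u) := by simp [Finset.mem_erase, (Ne.symm huw), hw]
      have : a = w := h hae hwe (by rw [hab, hbu, hl])
      exact ha.2 this
    · exact h (by simp [Finset.mem_erase, hau, ha.1]) (by simp [Finset.mem_erase, hbu, hb.1]) hab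

lemma image_erase_of_dup {s : Finset V} {u w : V} (hu : u ∈ s) (hw : w ∈ s) (huw : u ≠ w)
    (hl : lam u = lam w) : (s.erase u).image lam = s.image lam := by
  apply Finset.Subset.antisymm (Finset.image_subset_image (Finset.erase_subset _ _))
  intro j hj
  obtain ⟨x, hx, rfl⟩ := Finset.mem_image.1 hj
  by_cases hxu : x = u
  · exact Finset.mem_image.2 ⟨w, Finset.mem_erase.2 ⟨Ne.symm huw, hw⟩, by rw [hxu, hl]⟩
  · exact Finset.mem_image.2 ⟨x, Finset.mem_erase.2 ⟨hxu, hx⟩, rfl⟩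

end Comb

set_option linter.unusedSectionVars false
set_option linter.unusedVariables false

lemma phi_bd {V : Type*} [DecidableEq V] {k : ℕ} (lam : V → Fin k)
    (c : Finset V →₀ ZMod 2) : phiHom lam (bd c) = bd (phiHom lam c) := by
  classical
  rw [bd_eq, bd_eq]
  suffices h : (phiHom lam).comp (bdHom V) = (bdHom (Fin k)).comp (phiHom lam) by
    have := LinearMap.congr_fun h c
    simpa using this
  apply Finsupp.lhom_ext
  intro s a
  have hbds : bdHom V (Finsupp.single s a) = a • ∑ v ∈ s, Finsupp.single (s.erase v) (1 : ZMod 2) := by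
    rw [← bd_eq, bd_single]
  simp only [LinearMap.comp_apply, hbds, map_smul, map_sum, phi_single]
  by_cases h : Set.InjOn lam ↑s
  · rw [if_pos h, ← bd_eq, bd_single, Finset.sum_image
      (fun x hx y hy hxy => h (Finset.mem_coe.2 hx) (Finset.mem_coe.2 hy) hxy)]
    congr 1
    apply Finset.sum_congr rfl
    intro v hv
    rw [if_pos (h.mono (by exact_mod_cast Finset.erase_subset v s)),
      image_erase_of_injOn h hv]
  · rw [if_neg h, map_zero]
    rw [← Finset.sum_filter]
    rcases Finset.eq_empty_or_nonempty
        (s.filter fun v => Set.InjOn lam ↑(s.erase v)) with he | ⟨u, hu⟩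
    · rw [he, Finset.sum_empty, smul_zero]
    · have hus : u ∈ s := (Finset.mem_filter.1 hu).1
      have hinju : Set.InjOn lam ↑(s.erase u) := (Finset.mem_filter.1 hu).2
      obtain ⟨x, hx, y, hy, hxy, hlxy⟩ := not_injOn_exists h
      -- produce w ≠ u in s with lam w = lam u
      have hw : ∃ w ∈ s, w ≠ u ∧ lam w = lam u := by
        by_cases hxu : x = u
        · exact ⟨y, hy, fun hyu => hxy (by rw [hxu, hyu]), by rw [← hlxy, hxu]⟩
        · by_cases hyu : y = u
          · exact ⟨x, hx, hxu, by rw [hlxy, hyu]⟩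
          · exfalso
            have : x = y := hinju (by simp [Finset.mem_erase, hxu, hx])
              (by simp [Finset.mem_erase, hyu, hy]) hlxy
            exact hxy this
      obtain ⟨w, hws, hwu, hlw⟩ := hw
      have hfilter : (s.filter fun v => Set.InjOn lam ↑(s.erase v)) = {u, w} := by
        ext v
        simp only [Finset.mem_filter, Finset.mem_insert, Finset.mem_singleton]
        constructor
        · rintro ⟨hvs, hinjv⟩
          by_contra hvc
          push_neg at hvc
          have hue : u ∈ ↑(s.erase v) := by simp [Finset.mem_erase, Ne.symm hvc.1, hus]
          have hwe : w ∈ ↑(s.erase v) := by simp [Finset.mem_erase, Ne.symm hvc.2, hws]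
          exact hwu (hinjv hwe hue hlw)
        · rintro (rfl | rfl)
          · exact ⟨hus, hinju⟩
          · exact ⟨hws, injOn_erase_swap hus hws (Ne.symm hwu) hlw.symm hinju⟩
      rw [hfilter, Finset.sum_pair (Ne.symm hwu),
        image_erase_of_dup hus hws (Ne.symm hwu) hlw.symm,
        image_erase_of_dup hws hus hwu hlw]
      have : (Finsupp.single (s.image lam) (1 : ZMod 2)) + Finsupp.single (s.image lam) 1 = 0 := by
        rw [← Finsupp.single_add]
        norm_num
        rfl
      rw [this, smul_zero]

lemma phi_apply_eq_zero {V : Type*} [DecidableEq V] {k : ℕ} (lam : V → Fin k)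
    (c : Finset V →₀ ZMod 2) (t : Finset (Fin k))
    (h : ∀ s ∈ c.support, Set.InjOn lam ↑s → s.image lam ≠ t) :
    phiHom lam c t = 0 := by
  classical
  unfold phiHom
  rw [Finsupp.lsum_apply, Finsupp.sum_apply]
  apply Finset.sum_eq_zero
  intro s hs
  beta_reduce
  by_cases hinj : Set.InjOn lam ↑s
  · rw [if_pos hinj]
    simp only [Finsupp.lsingle_apply]
    rw [Finsupp.single_apply, if_neg (h s hs hinj)]
  · rw [if_neg hinj]
    simp

lemma phi_eq_single {V : Type*} [DecidableEq V] {k : ℕ} (lam : V → Fin k)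
    (c : Finset V →₀ ZMod 2) (I : Finset (Fin k))
    (h : ∀ s ∈ c.support, Set.InjOn lam ↑s → s.image lam = I) :
    phiHom lam c = Finsupp.single I (phiHom lam c I) := by
  ext t
  by_cases ht : t = I
  · subst ht; simp
  · rw [Finsupp.single_apply, if_neg (fun he => ht he.symm),
      phi_apply_eq_zero lam c t (fun s hs hinj => by rw [h s hs hinj]; exact fun he => ht he.symm)]

lemma add_self_zmod2 {V : Type*} (x : Finset V →₀ ZMod 2) : x + x = 0 := by
  rw [← one_smul (ZMod 2) x, ← add_smul]
  have : (1 : ZMod 2) + 1 = 0 := by decide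
  rw [this, zero_smul]

lemma exists_family {V : Type*} [DecidableEq V] {k : ℕ}
    (K : Finset (Fin k) → Set (Finset V))
    (hcx : ∀ I, IsComplex (K I))
    (hmono : ∀ I J : Finset (Fin k), I ⊆ J → K I ⊆ K J)
    (hconn : ∀ I : Finset (Fin k), HomConnected (K I) ((I.card : ℤ) - 2)) :
    ∀ n : ℕ, ∃ c : Finset (Fin k) → (Finset V →₀ ZMod 2),
      c ∅ = Finsupp.single ∅ 1 ∧
      ∀ I, I.card ≤ n → IsChainOn (K I) I.card (c I) ∧ bd (c I) = ∑ i ∈ I, c (I.erase i) := by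
  intro n
  induction n with
  | zero =>
    refine ⟨fun _ => Finsupp.single ∅ 1, rfl, ?_⟩
    intro I hI
    have hIe : I = ∅ := Finset.card_eq_zero.1 (Nat.le_zero.1 hI)
    subst hIe
    constructor
    · intro s hs
      rw [Finsupp.support_single_ne_zero _ one_ne_zero, Finset.mem_singleton] at hs
      subst hs
      exact ⟨(hcx ∅).1, by simp⟩
    · rw [bd_single]
      simp
  | succ n ih =>
    obtain ⟨c, hc0, hc⟩ := ih
    have hfill : ∀ I : Finset (Fin k), I.card = n + 1 →
        ∃ b, IsChainOn (K I) I.card b ∧ bd b = ∑ i ∈ I, c (I.erase i) := by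
      intro I hI
      have hcard_erase : ∀ i ∈ I, (I.erase i).card = n := fun i hi => by
        rw [Finset.card_erase_of_mem hi, hI]
        omega
      have hchain : IsChainOn (K I) n (∑ i ∈ I, c (I.erase i)) := by
        intro s hs
        obtain ⟨i, hi, hsi⟩ := Finset.mem_biUnion.1 (Finsupp.support_finset_sum hs)
        obtain ⟨hsK, hscard⟩ := (hc (I.erase i) (le_of_eq (hcard_erase i hi))).1 s hsi
        exact ⟨hmono _ _ (Finset.erase_subset _ _) hsK, by rw [hscard, hcard_erase i hi]⟩
      have hbz : bd (∑ i ∈ I, c (I.erase i)) = 0 := by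
        rw [bd_eq, map_sum]
        simp_rw [← bd_eq]
        rw [Finset.sum_congr rfl
          (fun i hi => (hc (I.erase i) (le_of_eq (hcard_erase i hi))).2),
          Finset.sum_sigma']
        refine Finset.sum_involution (fun p _ => ⟨p.2, p.1⟩) ?h1 ?h3 ?gmem ?h4
        case h1 =>
          intro p hp
          rw [Finset.erase_right_comm (a := p.1)]
          exact add_self_zmod2 _
        case h3 =>
          intro p hp _ heq
          exact (Finset.mem_erase.1 (Finset.mem_sigma.1 hp).2).1 (congrArg Sigma.fst heq)
        case gmem =>
          intro p hp
          simp only [Finset.mem_sigma, Finset.mem_erase] at hp ⊢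
          exact ⟨hp.2.2, Ne.symm hp.2.1, hp.1⟩
        case h4 =>
          intro p hp
          rfl
      obtain ⟨b, hb, hbd⟩ := hconn I n
        (by rw [hI]; push_cast; omega) _ hchain hbz
      refine ⟨b, ?_, hbd⟩
      rwa [hI]
    set c' : Finset (Fin k) → (Finset V →₀ ZMod 2) := fun I =>
      if h : I.card ≤ n then c I else if h2 : I.card = n + 1 then (hfill I h2).choose else 0
      with hc'def
    have herase : ∀ I : Finset (Fin k), I.card ≤ n + 1 → ∀ i ∈ I, c' (I.erase i) = c (I.erase i) := by
      intro I hI i hi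
      rw [hc'def]
      have : (I.erase i).card ≤ n := by
        rw [Finset.card_erase_of_mem hi]; omega
      simp only [dif_pos this]
    refine ⟨c', by rw [hc'def]; simp [hc0], ?_⟩
    intro I hI
    have hsum : ∑ i ∈ I, c' (I.erase i) = ∑ i ∈ I, c (I.erase i) :=
      Finset.sum_congr rfl (herase I hI)
    by_cases h : I.card ≤ n
    · have : c' I = c I := by rw [hc'def]; simp only [dif_pos h]
      rw [this, hsum]
      exact hc I h
    · have h2 : I.card = n + 1 := by omega
      have : c' I = (hfill I h2).choose := by rw [hc'def]; simp only [dif_neg h, dif_pos h2]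
      rw [this, hsum]
      exact (hfill I h2).choose_spec


/-- Sperner–Meshulam lemma. Let `{K^I}_{I ⊆ [k]}` be simplicial complexes
with `K^I ⊆ K^J` for `I ⊆ J`, each `K^I` homologically `(|I|-2)`-connected over `ℤ/2`, and let
`λ` label the vertices so that `λ(v) ∈ I` whenever `v` is a vertex of `K^I`. Then `K^{[k]}`
has a `(k-1)`-dimensional simplex whose vertices get distinct labels. -/
theorem sperner_meshulam {V : Type*} [DecidableEq V] (k : ℕ) (hk : 0 < k)
    (K : Finset (Fin k) → Set (Finset V))
    (hcx : ∀ I, IsComplex (K I))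
    (hmono : ∀ I J : Finset (Fin k), I ⊆ J → K I ⊆ K J)
    (hconn : ∀ I : Finset (Fin k), HomConnected (K I) ((I.card : ℤ) - 2))
    (lam : V → Fin k)
    (hlab : ∀ I : Finset (Fin k), ∀ v : V, {v} ∈ K I → lam v ∈ I) :
    ∃ s ∈ K Finset.univ, s.card = k ∧ Set.InjOn lam ↑s := by
  obtain ⟨c, hc0, hc⟩ := exists_family K hcx hmono hconn k
  have hcard_le : ∀ I : Finset (Fin k), I.card ≤ k := fun I =>
    le_trans (Finset.card_le_univ I) (by simp)
  have himg : ∀ I, ∀ s : Finset V, s ∈ K I → s.image lam ⊆ I := by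
    intro I s hs j hj
    obtain ⟨x, hx, rfl⟩ := Finset.mem_image.1 hj
    exact hlab I x ((hcx I).2 s hs {x} (Finset.singleton_subset_iff.2 hx))
  have hphi : ∀ I : Finset (Fin k), phiHom lam (c I) = Finsupp.single I 1 := by
    intro I
    induction I using Finset.strongInduction with
    | H I ih =>
    rcases Finset.eq_empty_or_nonempty I with rfl | ⟨i0, hi0⟩
    · rw [hc0, phi_single]
      simp
    · obtain ⟨hchain, hbd⟩ := hc I (hcard_le I)
      have hsupp : ∀ s ∈ (c I).support, Set.InjOn lam ↑s → s.image lam = I := by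
        intro s hs hinj
        obtain ⟨hsK, hscard⟩ := hchain s hs
        apply Finset.eq_of_subset_of_card_le (himg I s hsK)
        rw [Finset.card_image_of_injOn hinj, hscard]
      have heq := phi_eq_single lam (c I) I hsupp
      have hb1 : bd (phiHom lam (c I)) =
          phiHom lam (c I) I • ∑ i ∈ I, Finsupp.single (I.erase i) (1 : ZMod 2) := by
        conv_lhs => rw [heq, bd_single]
      have hb2 : bd (phiHom lam (c I)) = ∑ i ∈ I, Finsupp.single (I.erase i) (1 : ZMod 2) := by
        rw [← phi_bd, hbd, map_sum]
        exact Finset.sum_congr rfl fun i hi => ih (I.erase i) (Finset.erase_ssubset hi)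
      have hS : (∑ i ∈ I, Finsupp.single (I.erase i) (1 : ZMod 2)) (I.erase i0) = 1 := by
        rw [Finsupp.finset_sum_apply, Finset.sum_eq_single i0]
        · simp
        · intro i hi hne
          rw [Finsupp.single_apply, if_neg]
          exact fun he => hne ((Finset.erase_inj I hi).1 he)
        · intro h
          exact absurd hi0 h
      have haI1 : phiHom lam (c I) I = 1 := by
        have h12 := congrArg (fun f : Finset (Fin k) →₀ ZMod 2 => f (I.erase i0))
          (hb1.symm.trans hb2)
        simp only [Finsupp.smul_apply, smul_eq_mul] at h12
        rw [hS, mul_one] at h12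
        exact h12
      rw [heq, haI1]
  have huniv := hphi Finset.univ
  by_contra hno
  push_neg at hno
  have hzero : phiHom lam (c Finset.univ) Finset.univ = 0 := by
    apply phi_apply_eq_zero
    intro s hs hinj
    obtain ⟨hsK, hscard⟩ := (hc Finset.univ (hcard_le _)).1 s hs
    exact absurd hinj (hno s hsK (by rw [hscard]; simp))
  rw [huniv, Finsupp.single_eq_same] at hzero
  exact one_ne_zero hzero
end

section
/- Given d+1 finite sets of points P_1, ..., P_{d+1} in R^d, each containing the origin in its convex hull, there exists a choice of one point p_i ∈ P_i for each i such that the origin lies in the convex hull of {p_1, ..., p_{d+1}}. Moreover, this convex statement follows from the conic version by the standard lifting x ↦ (x,1) into R^{d+1}. -/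
set_option maxHeartbeats 1000000

section ColorfulAux

open Finset Metric Module

variable {E : Type*} [NormedAddCommGroup E] [InnerProductSpace ℝ E] [FiniteDimensional ℝ E]

/-- If `0 ∈ convexHull P`, there is a point of `P` with nonpositive inner product with `q`. -/
lemma exists_inner_nonpos (q : E) {P : Finset E}
    (h : (0 : E) ∈ convexHull ℝ (P : Set E)) : ∃ x ∈ P, inner ℝ q x ≤ (0 : ℝ) := by
  rw [Finset.convexHull_eq] at h
  obtain ⟨w, hw0, hw1, hwc⟩ := h
  by_contra hcon
  push_neg at hcon
  have hc : P.centerMass w id = ∑ y ∈ P, w y • y := by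
    rw [Finset.centerMass_eq_of_sum_1 _ _ hw1]; rfl
  have h0 : (0 : ℝ) = ∑ y ∈ P, w y * inner ℝ q y := by
    have : inner ℝ q (∑ y ∈ P, w y • y) = ∑ y ∈ P, w y * inner ℝ q y := by
      rw [inner_sum]
      exact Finset.sum_congr rfl fun y _ => real_inner_smul_right q y (w y)
    rw [← this, ← hc, hwc, inner_zero_right]
  have hex : ∃ y ∈ P, 0 < w y := by
    by_contra hno
    push_neg at hno
    have : ∑ y ∈ P, w y = 0 := Finset.sum_eq_zero fun y hy =>
      le_antisymm (hno y hy) (hw0 y hy)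
    simp [this] at hw1
  obtain ⟨y₀, hy₀, hwy₀⟩ := hex
  have hpos : (0 : ℝ) < ∑ y ∈ P, w y * inner ℝ q y :=
    Finset.sum_pos' (fun y hy => mul_nonneg (hw0 y hy) (le_of_lt (hcon y hy)))
      ⟨y₀, hy₀, mul_pos hwy₀ (hcon y₀ hy₀)⟩
  linarith [h0]

lemma colorful_inner (d : ℕ) (hdim : finrank ℝ E ≤ d) (P : Fin (d + 1) → Finset E)
    (h : ∀ i, (0 : E) ∈ convexHull ℝ (P i : Set E)) :
    ∃ p : Fin (d + 1) → E, (∀ i, p i ∈ P i) ∧ (0 : E) ∈ convexHull ℝ (Set.range p) := by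
  classical
  -- the finite set of selections
  set S : Set (Fin (d + 1) → E) := Set.pi Set.univ (fun i => (P i : Set E)) with hS
  have hSfin : S.Finite := Set.Finite.pi fun i => (P i).finite_toSet
  have hPne : ∀ i, ((P i : Set E)).Nonempty := by
    intro i
    by_contra hne
    have hi := h i
    rw [Set.not_nonempty_iff_eq_empty.mp hne, convexHull_empty] at hi
    exact hi
  have hSne : S.Nonempty := by
    refine ⟨fun i => (hPne i).choose, fun i _ => (hPne i).choose_spec⟩
  obtain ⟨p, hpS, hmin⟩ := Set.exists_min_image S
    (fun p => infDist 0 (convexHull ℝ (Set.range p))) hSfin hSne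
  have hp : ∀ i, p i ∈ P i := fun i => hpS i (Set.mem_univ i)
  refine ⟨p, hp, ?_⟩
  set K : Set E := convexHull ℝ (Set.range p) with hK
  have hKconv : Convex ℝ K := convex_convexHull ℝ _
  have hKcomp : IsCompact K := (Set.finite_range p).isCompact_convexHull ℝ
  have hKne : K.Nonempty := by
    rw [hK, convexHull_nonempty_iff]; exact Set.range_nonempty p
  obtain ⟨q, hqK, hqd⟩ := hKcomp.exists_infDist_eq_dist hKne 0
  by_cases hq0 : q = 0
  · rwa [← hq0]
  exfalso
  -- variational inequality
  have hvar : ∀ w ∈ K, (inner ℝ q q : ℝ) ≤ inner ℝ q w := by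
    have heq : ‖(0 : E) - q‖ = ⨅ w : K, ‖(0 : E) - w‖ := by
      rw [← dist_eq_norm, ← hqd, infDist_eq_iInf]
      exact iInf_congr fun w => (dist_eq_norm _ _)
    have := (norm_eq_iInf_iff_real_inner_le_zero hKconv hqK).mp heq
    intro w hw
    have h2 := this w hw
    have h3 : (inner ℝ ((0 : E) - q) (w - q) : ℝ) = inner ℝ q q - inner ℝ q w := by
      rw [zero_sub, inner_neg_left, inner_sub_right]; ring
    rw [h3] at h2
    linarith
  have hqq : (0 : ℝ) < inner ℝ q q := by
    rw [real_inner_self_eq_norm_sq]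
    have : 0 < ‖q‖ := norm_pos_iff.mpr hq0
    positivity
  -- representation of q with positive weights on the contact face
  have hqK' := hqK
  rw [hK, ← Set.image_univ, ← Finset.coe_univ, ← Finset.coe_image, Finset.convexHull_eq] at hqK'
  obtain ⟨w, hw0, hw1, hwc⟩ := hqK'
  set F : Finset E := Finset.image p Finset.univ with hF
  have hcm : ∑ y ∈ F, w y • y = q := by
    rw [← Finset.centerMass_eq_of_sum_1 _ _ hw1]; exact hwc
  -- complementary slackness
  have hslack : ∀ y ∈ F, w y ≠ 0 → (inner ℝ q y : ℝ) = inner ℝ q q := by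
    have hyK : ∀ y ∈ F, y ∈ K := by
      intro y hy
      apply subset_convexHull ℝ _
      rw [hF] at hy
      simpa using hy
    have hsum0 : ∑ y ∈ F, w y * ((inner ℝ q y : ℝ) - inner ℝ q q) = 0 := by
      have h1 : ∑ y ∈ F, w y * (inner ℝ q y : ℝ) = inner ℝ q q := by
        have : (inner ℝ q (∑ y ∈ F, w y • y) : ℝ) = ∑ y ∈ F, w y * inner ℝ q y := by
          rw [inner_sum]; exact Finset.sum_congr rfl fun y _ => real_inner_smul_right q y (w y)
        rw [← this, hcm]
      have h2 : ∑ y ∈ F, w y * (inner ℝ q q : ℝ) = inner ℝ q q := by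
        rw [← Finset.sum_mul, hw1, one_mul]
      rw [Finset.sum_congr rfl fun y _ => mul_sub (w y) _ _, Finset.sum_sub_distrib, h1, h2,
        sub_self]
    have hnn : ∀ y ∈ F, 0 ≤ w y * ((inner ℝ q y : ℝ) - inner ℝ q q) := fun y hy =>
      mul_nonneg (hw0 y hy) (by linarith [hvar y (hyK y hy)])
    intro y hy hwy
    have := (Finset.sum_eq_zero_iff_of_nonneg hnn).mp hsum0 y hy
    rcases mul_eq_zero.mp this with h' | h'
    · exact absurd h' hwy
    · linarith
  -- restrict to positive weights
  set F' : Finset E := F.filter (fun y => w y ≠ 0) with hF'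
  have hqF' : q ∈ convexHull ℝ (F' : Set E) := by
    rw [Finset.convexHull_eq]
    refine ⟨w, fun y hy => hw0 y (Finset.mem_of_mem_filter y hy), ?_, ?_⟩
    · rw [hF', Finset.sum_filter_ne_zero]; exact hw1
    · rw [Finset.centerMass_eq_of_sum_1]
      · show ∑ y ∈ F', w y • y = q
        rw [← hcm, hF']
        exact Finset.sum_filter_of_ne (fun y _ hne => by
          intro hw; apply hne; rw [hw, zero_smul])
      · rw [hF', Finset.sum_filter_ne_zero]; exact hw1
  -- Caratheodory on the face
  rw [convexHull_eq_union] at hqF'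
  simp only [Set.mem_iUnion, exists_prop] at hqF'
  obtain ⟨T, hTsub, hTai, hqT⟩ := hqF'
  have hTne : T.Nonempty := by
    rcases T.eq_empty_or_nonempty with rfl | hne
    · simp at hqT
    · exact hne
  -- every element of T has inner product ⟪q,q⟫ with q
  have hTface : ∀ y ∈ T, (inner ℝ q y : ℝ) = inner ℝ q q := by
    intro y hy
    have := hTsub hy
    rw [hF', Finset.coe_filter] at this
    exact hslack y this.1 this.2
  -- cardinality bound : T.card ≤ d
  have hcard : T.card ≤ d := by
    haveI hne : Nonempty {x // x ∈ T} := ⟨⟨hTne.choose, hTne.choose_spec⟩⟩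
    have hvs := hTai.finrank_vectorSpan_add_one
    -- vectorSpan ⊆ ker of inner q
    set f : E →ₗ[ℝ] ℝ := (innerSL ℝ q : E →L[ℝ] ℝ).toLinearMap with hf
    have hker : vectorSpan ℝ (Set.range (Subtype.val : {x // x ∈ T} → E)) ≤ LinearMap.ker f := by
      rw [vectorSpan_def, Submodule.span_le]
      rintro v ⟨a, ha, b, hb, rfl⟩
      have ha' : a ∈ T := by simpa using ha
      have hb' : b ∈ T := by simpa using hb
      simp only [SetLike.mem_coe, LinearMap.mem_ker]
      show (inner ℝ q (a -ᵥ b) : ℝ) = 0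
      rw [vsub_eq_sub, inner_sub_right, hTface a ha', hTface b hb', sub_self]
    have hfrange : LinearMap.range f = ⊤ := by
      rw [LinearMap.range_eq_top]
      intro c
      refine ⟨(c / inner ℝ q q) • q, ?_⟩
      show (inner ℝ q ((c / inner ℝ q q) • q) : ℝ) = c
      rw [real_inner_smul_right]
      field_simp
    have hkerrank : finrank ℝ (LinearMap.ker f) + 1 = finrank ℝ E := by
      have := LinearMap.finrank_range_add_finrank_ker f
      rw [hfrange] at this
      simp only [finrank_top, finrank_self] at this
      omega
    have hle : finrank ℝ (vectorSpan ℝ (Set.range (Subtype.val : {x // x ∈ T} → E))) ≤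
        finrank ℝ (LinearMap.ker f) := Submodule.finrank_mono hker
    have hcardT : Fintype.card {x // x ∈ T} = T.card := Fintype.card_coe T
    omega
  -- find a free color
  have hchoice : ∀ y ∈ T, ∃ j : Fin (d + 1), p j = y := by
    intro y hy
    have := hTsub hy
    rw [hF'] at this
    have := Finset.mem_of_mem_filter y this
    rw [hF, Finset.mem_image] at this
    obtain ⟨j, _, hj⟩ := this
    exact ⟨j, hj⟩
  set g : (y : E) → y ∈ T → Fin (d + 1) := fun y hy => (hchoice y hy).choose with hg
  set Sc : Finset (Fin (d + 1)) := T.attach.image (fun y => g y.1 y.2) with hSc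
  have hScard : Sc.card ≤ d := le_trans (Finset.card_image_le.trans (by simp)) hcard
  have hfree : ∃ i : Fin (d + 1), i ∉ Sc := by
    by_contra hcon
    push_neg at hcon
    have : (Finset.univ : Finset (Fin (d + 1))).card ≤ Sc.card :=
      Finset.card_le_card fun i _ => hcon i
    simp at this
    omega
  obtain ⟨i, hi⟩ := hfree
  -- pick x in P i with nonpositive inner product
  obtain ⟨x, hxP, hxq⟩ := exists_inner_nonpos q (h i)
  -- the new selection
  set p' : Fin (d + 1) → E := Function.update p i x with hp'
  have hp'S : p' ∈ S := by
    intro j _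
    rcases eq_or_ne j i with rfl | hne
    · rw [hp', Function.update_self]; exact hxP
    · rw [hp', Function.update_of_ne hne]; exact hp j
  set K' : Set E := convexHull ℝ (Set.range p') with hK'
  have hTsub' : (T : Set E) ⊆ Set.range p' := by
    intro y hy
    have hyT : y ∈ T := hy
    refine ⟨g y hyT, ?_⟩
    have hgy : g y hyT ≠ i := by
      intro hcontra
      apply hi
      rw [hSc, Finset.mem_image]
      exact ⟨⟨y, hyT⟩, Finset.mem_attach _ _, hcontra⟩
    rw [hp', Function.update_of_ne hgy]
    exact (hchoice y hyT).choose_spec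
  have hqK'2 : q ∈ K' := convexHull_mono hTsub' hqT
  have hxK' : x ∈ K' := subset_convexHull ℝ _ ⟨i, by rw [hp', Function.update_self]⟩
  -- find a closer point in K'
  set a : ℝ := inner ℝ q q with ha
  set b : ℝ := ‖x - q‖ ^ 2 with hb
  have hbpos : 0 < b := by
    rw [hb]
    have hxqne : x ≠ q := by
      intro hcontra
      rw [hcontra] at hxq
      linarith
    have hsub : x - q ≠ 0 := sub_ne_zero.mpr hxqne
    exact pow_pos (norm_pos_iff.mpr hsub) 2
  set t : ℝ := min 1 (a / b) with ht
  have ht0 : 0 < t := lt_min one_pos (div_pos hqq hbpos)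
  have ht1 : t ≤ 1 := min_le_left _ _
  set z : E := q + t • (x - q) with hz
  have hzK' : z ∈ K' := by
    have : z = (1 - t) • q + t • x := by
      rw [hz]; module
    rw [this]
    exact (convex_convexHull ℝ _) hqK'2 hxK' (by linarith) (le_of_lt ht0) (by ring)
  have hznorm : ‖z‖ ^ 2 < ‖q‖ ^ 2 := by
    have hexp : ‖z‖ ^ 2 = ‖q‖ ^ 2 + 2 * (t * inner ℝ q (x - q)) + t ^ 2 * b := by
      rw [hz, hb, norm_add_sq_real, real_inner_smul_right, norm_smul, Real.norm_eq_abs,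
        mul_pow, sq_abs]
    have hiqx : (inner ℝ q (x - q) : ℝ) ≤ -a := by
      rw [inner_sub_right, ha]; linarith
    have hq2 : ‖q‖ ^ 2 = a := by rw [ha, real_inner_self_eq_norm_sq]
    have htb : t ^ 2 * b ≤ t * a := by
      have : t * b ≤ a := by
        rcases min_le_iff.mp (le_refl t) with _ | _
        · calc t * b ≤ (a / b) * b := by
                have : t ≤ a / b := min_le_right _ _
                exact mul_le_mul_of_nonneg_right this (le_of_lt hbpos)
             _ = a := by field_simp
        · calc t * b ≤ (a / b) * b := by
                have : t ≤ a / b := min_le_right _ _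
                exact mul_le_mul_of_nonneg_right this (le_of_lt hbpos)
             _ = a := by field_simp
      calc t ^ 2 * b = t * (t * b) := by ring
        _ ≤ t * a := mul_le_mul_of_nonneg_left this (le_of_lt ht0)
    have : 2 * (t * inner ℝ q (x - q)) ≤ -2 * t * a :=  by nlinarith [ht0]
    nlinarith [hexp, htb, hq2, ht0, hqq]
  have hlt : ‖z‖ < ‖q‖ := by
    nlinarith [hznorm, norm_nonneg z, norm_nonneg q]
  -- contradiction with minimality
  have h1 : infDist 0 K' ≤ ‖z‖ := by
    have := infDist_le_dist_of_mem (x := (0 : E)) hzK'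
    rwa [dist_zero_left] at this
  have h2 : infDist 0 K = ‖q‖ := by rw [hqd, dist_zero_left]
  have h3 := hmin p' hp'S
  rw [← hK'] at h3
  linarith

end ColorfulAux


/-- The lifting `x ↦ (x, 1)` from `ℝ^d` to `ℝ^{d+1}`. -/
def lift {d : ℕ} (x : Fin d → ℝ) : Fin (d + 1) → ℝ := Fin.snoc x 1

/-- Bárány's colorful Carathéodory theorem, with the lifting reduction.
Given `d+1` finite sets of points in `ℝ^d`, each containing the origin in its convex hull,
one can select one point from each set so that the origin lies in the convex hull of the
selection. Moreover, for any finite `Q ⊆ ℝ^d`, the origin lies in the convex hull of `Q` iff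
the vector `(0,…,0,1)` lies in the conic hull of the lifted set `{(x,1) : x ∈ Q} ⊆ ℝ^{d+1}`,
which reduces this convex statement to the conic colorful Carathéodory theorem. -/
theorem colorful_caratheodory_real (d : ℕ) (P : Fin (d + 1) → Finset (Fin d → ℝ))
    (h : ∀ i, (0 : Fin d → ℝ) ∈ convexHull ℝ (P i : Set (Fin d → ℝ))) :
    (∃ p : Fin (d + 1) → (Fin d → ℝ), (∀ i, p i ∈ P i) ∧
        (0 : Fin d → ℝ) ∈ convexHull ℝ (Set.range p)) ∧
    (∀ Q : Finset (Fin d → ℝ),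
      (0 : Fin d → ℝ) ∈ convexHull ℝ (Q : Set (Fin d → ℝ)) ↔
        ∃ c : (Fin d → ℝ) → ℝ, (∀ x, 0 ≤ c x) ∧
          lift (0 : Fin d → ℝ) = ∑ x ∈ Q, c x • lift x) := by
  classical
  constructor
  · -- transfer through EuclideanSpace
    set e : (Fin d → ℝ) ≃ₗ[ℝ] EuclideanSpace ℝ (Fin d) :=
      (WithLp.linearEquiv 2 ℝ (Fin d → ℝ)).symm with he
    set P' : Fin (d + 1) → Finset (EuclideanSpace ℝ (Fin d)) :=
      fun i => (P i).image e with hP'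
    have h' : ∀ i, (0 : EuclideanSpace ℝ (Fin d)) ∈ convexHull ℝ (P' i : Set _) := by
      intro i
      have : (P' i : Set (EuclideanSpace ℝ (Fin d))) = e '' (P i : Set (Fin d → ℝ)) := by
        rw [hP']; simp [Finset.coe_image]
      have himg := e.toLinearMap.image_convexHull ((P i : Set (Fin d → ℝ)))
      simp only [LinearEquiv.coe_coe] at himg
      rw [this, ← himg]
      exact ⟨0, h i, map_zero _⟩
    obtain ⟨p', hp', hmem⟩ := colorful_inner d (le_of_eq (finrank_euclideanSpace_fin)) P' h'
    refine ⟨fun i => e.symm (p' i), fun i => ?_, ?_⟩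
    · show e.symm (p' i) ∈ P i
      have := hp' i
      rw [hP', Finset.mem_image] at this
      obtain ⟨x, hx, hxe⟩ := this
      rw [← hxe, e.symm_apply_apply]
      exact hx
    · have hr : Set.range (fun i => e.symm (p' i)) = e.symm '' Set.range p' := by
        rw [← Set.range_comp]; rfl
      have himg := e.symm.toLinearMap.image_convexHull (Set.range p')
      simp only [LinearEquiv.coe_coe] at himg
      rw [hr, ← himg]
      exact ⟨0, hmem, map_zero _⟩
  · intro Q
    constructor
    · intro hQ
      rw [Finset.convexHull_eq] at hQ
      obtain ⟨w, hw0, hw1, hwc⟩ := hQ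
      have hcm : ∑ y ∈ Q, w y • y = 0 := by
        rw [← Finset.centerMass_eq_of_sum_1 _ _ hw1]; exact hwc
      refine ⟨fun x => if x ∈ Q then w x else 0, fun x => ?_, ?_⟩
      · simp only
        split
        · exact hw0 x ‹_›
        · exact le_refl 0
      · funext j
        rw [Finset.sum_apply]
        refine Fin.lastCases ?_ ?_ j
        · show lift (0 : Fin d → ℝ) (Fin.last d) = _
          rw [lift, Fin.snoc_last]
          have : ∀ x ∈ Q, ((if x ∈ Q then w x else 0) • lift x) (Fin.last d) = w x := by
            intro x hx
            simp [lift, Fin.snoc_last, hx]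
          rw [Finset.sum_congr rfl this, hw1]
        · intro j
          show lift (0 : Fin d → ℝ) (Fin.castSucc j) = _
          rw [lift, Fin.snoc_castSucc]
          have h0 : ∀ x ∈ Q, ((if x ∈ Q then w x else 0) • lift x) (Fin.castSucc j)
              = w x * x j := by
            intro x hx
            simp [lift, Fin.snoc_castSucc, hx]
          rw [Finset.sum_congr rfl h0]
          have := congrFun hcm j
          rw [Finset.sum_apply] at this
          simp only [Pi.smul_apply, smul_eq_mul] at this
          simp only [Pi.zero_apply] at this ⊢
          exact this.symm
    · rintro ⟨c, hc0, hcs⟩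
      have hlast := congrFun hcs (Fin.last d)
      rw [Finset.sum_apply] at hlast
      have hl1 : ∀ x ∈ Q, (c x • lift x) (Fin.last d) = c x := by
        intro x _; simp [lift, Fin.snoc_last]
      rw [Finset.sum_congr rfl hl1] at hlast
      have hsum1 : ∑ x ∈ Q, c x = 1 := by
        rw [← hlast]; simp [lift, Fin.snoc_last]
      have hzero : ∑ x ∈ Q, c x • x = 0 := by
        funext j
        rw [Finset.sum_apply]
        have := congrFun hcs (Fin.castSucc j)
        rw [Finset.sum_apply] at this
        have h0 : ∀ x ∈ Q, (c x • lift x) (Fin.castSucc j) = c x * x j := by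
          intro x _; simp [lift, Fin.snoc_castSucc]
        rw [Finset.sum_congr rfl h0] at this
        have hL : lift (0 : Fin d → ℝ) (Fin.castSucc j) = 0 := by
          simp [lift, Fin.snoc_castSucc]
        rw [hL] at this
        simpa using this.symm
      have : Q.centerMass c id = 0 := by
        rw [Finset.centerMass_eq_of_sum_1 _ _ hsum1]
        simpa using hzero
      rw [← this]
      exact Finset.centerMass_mem_convexHull Q (fun x hx => hc0 x) (by rw [hsum1]; norm_num)
        (fun x hx => Finset.mem_coe.mpr hx)
end
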